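/- arXiv:2001.10896 — 5 statements merged into one kernel-verified Lean document; each statement's English description precedes it below -/
import Mathlib

section
/- Let 0 < α < 1, let a < b be real numbers, and let f : [a,b] → ℝ be absolutely continuous such that t ↦ (I_a^{1-α} f)(t) is also absolutely continuous on [a,b] and the limit L = lim_{t→a⁺} (I_a^{1-α} f)(t) exists. Then for every t ∈ (a,b), (I_a^α (D_a^{RL,α} f))(t) = f(t) − L / (Γ(α) (t-a)^{1-α}). -/
open MeasureTheory Filter Topology Set

/-- Riemann–Liouville fractional integral of order `α` with base point `a`:
`(I_a^α f)(t) = (1/Γ(α)) ∫_a^t (t-τ)^(α-1) f(τ) dτ`. -/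
noncomputable def rlInt (a α : ℝ) (f : ℝ → ℝ) (t : ℝ) : ℝ :=
  (1 / Real.Gamma α) * ∫ τ in a..t, (t - τ) ^ (α - 1) * f τ

/-- Riemann–Liouville fractional derivative of order `α ∈ (0,1)` with base point `a`:
`(D_a^{RL,α} f)(t) = d/dt (I_a^{1-α} f)(t)`. -/
noncomputable def rlDeriv (a α : ℝ) (f : ℝ → ℝ) (t : ℝ) : ℝ :=
  deriv (rlInt a (1 - α) f) t

/-- Caputo fractional derivative of order `α ∈ (0,1)` with base point `a`:
`(D_a^{C,α} f)(t) = (1/Γ(1-α)) ∫_a^t (t-τ)^(-α) f'(τ) dτ`. -/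
noncomputable def caputoDeriv (a α : ℝ) (f : ℝ → ℝ) (t : ℝ) : ℝ :=
  (1 / Real.Gamma (1 - α)) * ∫ τ in a..t, (t - τ) ^ (-α) * deriv f τ

/-- Absolute continuity of `f` on `[a,b]`, via the integral characterization:
`f(t) = f(a) + ∫_a^t g` for some integrable `g`. -/
def AbsContOn (f : ℝ → ℝ) (a b : ℝ) : Prop :=
  ∃ g : ℝ → ℝ, IntervalIntegrable g MeasureTheory.volume a b ∧
    ∀ t ∈ Set.Icc a b, f t = f a + ∫ τ in a..t, g τ

/-- The Wright function `W(x,ρ,β) = ∑_{k} x^k / (k! Γ(ρk+β))`. -/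
noncomputable def wright (x ρ β : ℝ) : ℝ :=
  ∑' k : ℕ, x ^ k / ((Nat.factorial k : ℝ) * Real.Gamma (ρ * (k : ℝ) + β))

/-- The error function `erf(x) = (2/√π) ∫_0^x e^{-z²} dz`. -/
noncomputable def erfReal (x : ℝ) : ℝ :=
  (2 / Real.sqrt Real.pi) * ∫ z in (0:ℝ)..x, Real.exp (-z ^ 2)


lemma cEq (p q : ℝ) : ∀ x ∈ Icc (0:ℝ) 1,
    ((x ^ (p-1) * (1-x) ^ (q-1) : ℝ) : ℂ) = (x:ℂ) ^ ((p:ℂ) - 1) * (1 - (x:ℂ)) ^ ((q:ℂ) - 1) := by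
  intro x hx
  rw [Complex.ofReal_mul, Complex.ofReal_cpow hx.1 (p-1),
    Complex.ofReal_cpow (by linarith [hx.2]) (q-1)]
  push_cast
  rfl

lemma realBeta_integrable {p q : ℝ} (hp : 0 < p) (hq : 0 < q) :
    IntervalIntegrable (fun x : ℝ => x ^ (p-1) * (1-x) ^ (q-1)) volume 0 1 := by
  have hc := Complex.betaIntegral_convergent (u := (p:ℂ)) (v := (q:ℂ)) (by simpa) (by simpa)
  rw [intervalIntegrable_iff_integrableOn_Ioc_of_le zero_le_one] at hc ⊢
  have := hc.re
  refine this.congr ?_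
  filter_upwards [ae_restrict_mem measurableSet_Ioc] with x hx
  have := cEq p q x ⟨hx.1.le, hx.2⟩
  rw [← this]; simp

lemma realBeta {p q : ℝ} (hp : 0 < p) (hq : 0 < q) :
    ∫ x in (0:ℝ)..1, x ^ (p-1) * (1-x) ^ (q-1)
      = Real.Gamma p * Real.Gamma q / Real.Gamma (p+q) := by
  have h1 : Complex.betaIntegral p q = ((∫ x in (0:ℝ)..1, x ^ (p-1) * (1-x) ^ (q-1) : ℝ) : ℂ) := by
    rw [← intervalIntegral.integral_ofReal]
    unfold Complex.betaIntegral
    refine intervalIntegral.integral_congr fun x hx => ?_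
    rw [uIcc_of_le zero_le_one] at hx
    exact (cEq p q x hx).symm
  have h2 := Complex.Gamma_mul_Gamma_eq_betaIntegral (s := (p:ℂ)) (t := (q:ℂ)) (by simpa) (by simpa)
  rw [h1, Complex.Gamma_ofReal, Complex.Gamma_ofReal, ← Complex.ofReal_add,
    Complex.Gamma_ofReal, ← Complex.ofReal_mul, ← Complex.ofReal_mul] at h2
  have h3 := Complex.ofReal_injective h2
  have hne : Real.Gamma (p+q) ≠ 0 := (Real.Gamma_pos_of_pos (by linarith)).ne'
  field_simp
  linarith [h3]

lemma model_intble {c : ℝ} (p q : ℝ) (hp : 0 < p) (hq : 0 < q) (hc0 : 0 < c) :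
    IntervalIntegrable (fun x : ℝ => (c*(1-x)) ^ (p-1) * (c*x) ^ (q-1)) volume 0 1 := by
  rw [intervalIntegrable_iff_integrableOn_Ioc_of_le zero_le_one]
  have hb : IntegrableOn (fun x : ℝ => c ^ (p-1) * c ^ (q-1) * (x ^ (q-1) * (1-x) ^ (p-1)))
      (Ioc 0 1) volume := by
    have := (realBeta_integrable hq hp).const_mul (c ^ (p-1) * c ^ (q-1))
    rw [intervalIntegrable_iff_integrableOn_Ioc_of_le zero_le_one] at this
    exact this
  refine hb.congr ?_
  filter_upwards [ae_restrict_mem measurableSet_Ioc] with x hx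
  rw [Real.mul_rpow hc0.le (by linarith [hx.2]), Real.mul_rpow hc0.le hx.1.le]
  ring

lemma kernelIntble {u t : ℝ} (p q : ℝ) (hp : 0 < p) (hq : 0 < q) (hut : u ≤ t) :
    IntervalIntegrable (fun s => (t-s) ^ (p-1) * (s-u) ^ (q-1)) volume u t := by
  rcases eq_or_lt_of_le hut with rfl | hut
  · exact IntervalIntegrable.refl
  set c := t - u with hc
  have hc0 : 0 < c := by simp [hc]; linarith
  have h0 := model_intble p q hp hq hc0
  have h1 := (h0.comp_mul_right (c := c⁻¹)).comp_sub_right u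
  have e1 : (0:ℝ) / c⁻¹ + u = u := by field_simp; simp
  have e2 : (1:ℝ) / c⁻¹ + u = t := by field_simp; linarith
  rw [e1, e2] at h1
  have : (fun s => (c*(1-(s - u) * c⁻¹)) ^ (p-1) * (c*((s - u) * c⁻¹)) ^ (q-1))
      = fun s => (t-s) ^ (p-1) * (s-u) ^ (q-1) := by
    funext s
    have b1 : c*(1-(s - u) * c⁻¹) = t - s := by field_simp; ring
    have b2 : c*((s - u) * c⁻¹) = s - u := by field_simp
    rw [b1, b2]
  rwa [this] at h1

lemma kernelEval {u t : ℝ} (p q : ℝ) (hp : 0 < p) (hq : 0 < q) (hut : u < t) :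
    ∫ s in u..t, (t-s) ^ (p-1) * (s-u) ^ (q-1)
      = (t-u) ^ (p+q-1) * (Real.Gamma p * Real.Gamma q / Real.Gamma (p+q)) := by
  set c := t - u with hc
  have hc0 : 0 < c := by simp [hc]; linarith
  have h := intervalIntegral.integral_comp_mul_add
    (a := (0:ℝ)) (b := 1) (fun s => (t-s) ^ (p-1) * (s-u) ^ (q-1)) hc0.ne' u
  have e1 : c * 0 + u = u := by ring
  have e2 : c * 1 + u = t := by simp [hc]
  rw [e1, e2] at h
  -- h : ∫ x in 0..1, kernel (c*x+u) = c⁻¹ • ∫ s in u..t, kernel s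
  have h2 : ∫ x in (0:ℝ)..1, (t-(c*x+u)) ^ (p-1) * ((c*x+u)-u) ^ (q-1)
      = c ^ (p-1) * c ^ (q-1) * ∫ x in (0:ℝ)..1, x ^ (q-1) * (1-x) ^ (p-1) := by
    rw [← intervalIntegral.integral_const_mul]
    refine intervalIntegral.integral_congr fun x hx => ?_
    rw [uIcc_of_le zero_le_one] at hx
    have b1 : t-(c*x+u) = c*(1-x) := by simp [hc]; ring
    have b2 : (c*x+u)-u = c*x := by ring
    rw [b1, b2, Real.mul_rpow hc0.le (by linarith [hx.2]), Real.mul_rpow hc0.le hx.1]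
    ring
  rw [h2, realBeta hq hp] at h
  have := congrArg (fun z => c • z) h
  simp only [smul_smul, mul_inv_cancel₀ hc0.ne', one_smul, smul_eq_mul] at this
  rw [show c * (c⁻¹ * ∫ (x : ℝ) in u..t, (t - x) ^ (p - 1) * (x - u) ^ (q - 1)) = ∫ (x : ℝ) in u..t, (t - x) ^ (p - 1) * (x - u) ^ (q - 1) by field_simp] at this
  rw [← this]
  rw [show Real.Gamma q * Real.Gamma p / Real.Gamma (q+p)
      = Real.Gamma p * Real.Gamma q / Real.Gamma (p+q) by rw [mul_comm, add_comm]]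
  rw [show p+q-1 = 1 + (p-1) + (q-1) by ring]
  rw [Real.rpow_add hc0, Real.rpow_add hc0, Real.rpow_one]
  ring

lemma fub {a t p q : ℝ} {h : ℝ → ℝ} (hat : a < t) (hp : 0 < p) (hq : 0 < q) (hpq : 1 ≤ p + q)
    (hm : Measurable h) (hint : IntegrableOn h (Ioc a t)) :
    IntegrableOn (fun s => (t-s) ^ (p-1) * ∫ u in a..s, (s-u) ^ (q-1) * h u) (Ioc a t) ∧
    ∫ s in a..t, (t-s) ^ (p-1) * ∫ u in a..s, (s-u) ^ (q-1) * h u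
      = (Real.Gamma p * Real.Gamma q / Real.Gamma (p+q)) * ∫ u in a..t, (t-u) ^ (p+q-1) * h u := by
  set B : ℝ := Real.Gamma p * Real.Gamma q / Real.Gamma (p+q) with hB
  have hBpos : 0 < B := div_pos (mul_pos (Real.Gamma_pos_of_pos hp) (Real.Gamma_pos_of_pos hq))
    (Real.Gamma_pos_of_pos (by linarith))
  set ρ : Measure ℝ := volume.restrict (Ioc a t) with hρ
  set G : ℝ × ℝ → ℝ := fun z =>
    if z.2 < z.1 then (t - z.1) ^ (p-1) * ((z.1 - z.2) ^ (q-1) * h z.2) else 0 with hG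
  have hGmble : Measurable G := by
    apply Measurable.ite (measurableSet_lt measurable_snd measurable_fst) ?_ measurable_const
    fun_prop
  have hGm : AEStronglyMeasurable G (ρ.prod ρ) := hGmble.aestronglyMeasurable
  have haeU : ∀ᵐ u ∂ρ, u ∈ Ioo a t := by
    have h1 : ∀ᵐ u ∂ρ, u ∈ Ioc a t := ae_restrict_mem measurableSet_Ioc
    have h2 : ∀ᵐ u ∂ρ, u ≠ t := by
      refine (ae_iff).2 ?_
      have he : {u : ℝ | ¬ u ≠ t} = {t} := by ext x; simp
      rw [he]
      exact le_antisymm ((Measure.restrict_apply_le _ _).trans_eq Real.volume_singleton)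
        zero_le
    filter_upwards [h1, h2] with u hu1 hu2
    exact ⟨hu1.1, lt_of_le_of_ne hu1.2 hu2⟩
  have hset : ∀ u ∈ Ioo a t, Ioi u ∩ Ioc a t = Ioc u t := by
    intro u hu; ext x; constructor
    · rintro ⟨h1, _, h3⟩; exact ⟨h1, h3⟩
    · rintro ⟨h1, h2⟩; exact ⟨h1, hu.1.trans h1, h2⟩
  -- value of section integral over Ioc u t with a constant multiplier
  have hval : ∀ u ∈ Ioo a t, ∀ c : ℝ,
      ∫ s in Ioc u t, (t-s) ^ (p-1) * ((s-u) ^ (q-1) * c)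
        = ((t-u) ^ (p+q-1) * B) * c := by
    intro u hu c
    rw [← intervalIntegral.integral_of_le hu.2.le]
    have e : ∫ s in u..t, (t - s) ^ (p-1) * ((s - u) ^ (q-1) * c)
        = (∫ s in u..t, (t - s) ^ (p-1) * (s - u) ^ (q-1)) * c := by
      rw [← intervalIntegral.integral_mul_const]
      exact intervalIntegral.integral_congr fun s _ => by ring
    rw [e, kernelEval p q hp hq hu.2]
  have hsecind : ∀ u, (fun s => G (s, u))
      = (Ioi u).indicator (fun s => (t - s) ^ (p-1) * ((s - u) ^ (q-1) * h u)) := by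
    intro u; funext s; simp only [hG, indicator, mem_Ioi]
  have hsec : ∀ u ∈ Ioo a t, Integrable (fun s => G (s, u)) ρ := by
    intro u hu
    rw [hsecind u, hρ, integrable_indicator_iff measurableSet_Ioi, IntegrableOn,
      Measure.restrict_restrict measurableSet_Ioi, hset u hu]
    have hk := (kernelIntble p q hp hq hu.2.le).mul_const (h u)
    rw [intervalIntegrable_iff_integrableOn_Ioc_of_le hu.2.le] at hk
    refine hk.congr ?_
    filter_upwards with s
    ring
  have hsecval : ∀ u ∈ Ioo a t, ∫ s, G (s, u) ∂ρ = ((t - u) ^ (p+q-1) * B) * h u := by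
    intro u hu
    rw [hsecind u, hρ, integral_indicator measurableSet_Ioi,
      Measure.restrict_restrict measurableSet_Ioi, hset u hu]
    exact hval u hu (h u)
  have hsecnorm : ∀ u ∈ Ioo a t,
      ∫ s, ‖G (s, u)‖ ∂ρ = ((t - u) ^ (p+q-1) * B) * |h u| := by
    intro u hu
    have e : ∫ s, ‖G (s, u)‖ ∂ρ
        = ∫ s, (Ioi u).indicator (fun s => (t - s) ^ (p-1) * ((s - u) ^ (q-1) * |h u|)) s ∂ρ := by
      refine integral_congr_ae ?_
      filter_upwards [ae_restrict_mem measurableSet_Ioc] with s hs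
      by_cases hus : u < s
      · simp only [hG, hus, if_true, indicator, mem_Ioi, Real.norm_eq_abs, abs_mul]
        rw [abs_of_nonneg (Real.rpow_nonneg (by linarith [hs.2]) _),
          abs_of_nonneg (Real.rpow_nonneg (by linarith) _)]
      · simp [hG, indicator, mem_Ioi, hus]
    rw [e, integral_indicator measurableSet_Ioi,
      Measure.restrict_restrict measurableSet_Ioi, hset u hu]
    exact hval u hu |h u|
  have hGint : Integrable G (ρ.prod ρ) := by
    refine (integrable_prod_iff' hGm).2 ⟨?_, ?_⟩
    · filter_upwards [haeU] with u hu using hsec u hu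
    · have hmeas : AEStronglyMeasurable (fun u => ∫ s, ‖G (s, u)‖ ∂ρ) ρ :=
        hGm.norm.prod_swap.integral_prod_right'
      refine Integrable.mono' ((hint.abs.mul_const ((t-a) ^ (p+q-1) * B)) : Integrable _ ρ)
        hmeas ?_
      filter_upwards [haeU] with u hu
      rw [Real.norm_eq_abs, abs_of_nonneg (integral_nonneg fun s => norm_nonneg _), hsecnorm u hu]
      have h1 : (t - u) ^ (p+q-1) ≤ (t - a) ^ (p+q-1) :=
        Real.rpow_le_rpow (by linarith [hu.2]) (by linarith [hu.1]) (by linarith)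
      have h2 : (0:ℝ) ≤ |h u| := abs_nonneg _
      calc (t - u) ^ (p+q-1) * B * |h u| ≤ (t - a) ^ (p+q-1) * B * |h u| :=
            mul_le_mul_of_nonneg_right (mul_le_mul_of_nonneg_right h1 hBpos.le) h2
        _ = |h u| * ((t-a) ^ (p+q-1) * B) := by ring
  have hswap : ∫ s, (∫ u, G (s, u) ∂ρ) ∂ρ = ∫ u, (∫ s, G (s, u) ∂ρ) ∂ρ :=
    integral_integral_swap hGint
  have hinner : ∀ s ∈ Ioc a t,
      ∫ u, G (s, u) ∂ρ = (t-s) ^ (p-1) * ∫ u in a..s, (s-u) ^ (q-1) * h u := by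
    intro s hs
    have e : (fun u => G (s, u))
        = (Iio s).indicator (fun u => (t - s) ^ (p-1) * ((s - u) ^ (q-1) * h u)) := by
      funext u; simp only [hG, indicator, mem_Iio]
    rw [e, hρ, integral_indicator measurableSet_Iio,
      Measure.restrict_restrict measurableSet_Iio]
    have hset2 : Iio s ∩ Ioc a t = Ioo a s := by
      ext x; constructor
      · rintro ⟨h1, h2, _⟩; exact ⟨h2, h1⟩
      · rintro ⟨h1, h2⟩; exact ⟨h2, h1, (le_of_lt h2).trans hs.2⟩
    rw [hset2, ← integral_Ioc_eq_integral_Ioo, ← intervalIntegral.integral_of_le hs.1.le,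
      intervalIntegral.integral_const_mul]
  -- Part 1 : integrability
  have part1 : IntegrableOn (fun s => (t-s) ^ (p-1) * ∫ u in a..s, (s-u) ^ (q-1) * h u)
      (Ioc a t) := by
    have := hGint.integral_prod_left
    refine Integrable.congr this ?_
    filter_upwards [ae_restrict_mem measurableSet_Ioc] with s hs
    exact hinner s hs
  refine ⟨part1, ?_⟩
  -- Part 2 : the identity
  have lhs : ∫ s in a..t, (t-s) ^ (p-1) * ∫ u in a..s, (s-u) ^ (q-1) * h u
      = ∫ s, (∫ u, G (s, u) ∂ρ) ∂ρ := by
    rw [intervalIntegral.integral_of_le hat.le]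
    refine integral_congr_ae ?_
    filter_upwards [ae_restrict_mem measurableSet_Ioc] with s hs
    exact (hinner s hs).symm
  have rhs : ∫ u, (∫ s, G (s, u) ∂ρ) ∂ρ = B * ∫ u in a..t, (t-u) ^ (p+q-1) * h u := by
    have e1 : ∫ u, (∫ s, G (s, u) ∂ρ) ∂ρ = ∫ u, B * ((t-u) ^ (p+q-1) * h u) ∂ρ := by
      refine integral_congr_ae ?_
      filter_upwards [haeU] with u hu
      rw [hsecval u hu]; ring
    rw [e1, integral_const_mul, hρ, ← intervalIntegral.integral_of_le hat.le]
  rw [lhs, hswap, rhs]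

lemma ae_hasDerivAt_primitive (c : ℝ) {g : ℝ → ℝ} (hg : Integrable g volume) :
    ∀ᵐ x : ℝ, HasDerivAt (fun y => ∫ u in c..y, g u) (g x) x := by
  filter_upwards [IsUnifLocDoublingMeasure.ae_tendsto_average_norm_sub (μ := volume)
    hg.locallyIntegrable 1] with x hx
  rw [hasDerivAt_iff_tendsto]
  set P : ℝ → ℝ := fun y => ∫ u in c..y, g u with hP
  set A : ℝ → ℝ := fun y => ⨍ z in Metric.closedBall ((x+y)/2) (|y - x|/2), ‖g z - g x‖ with hA
  have hδ : Tendsto (fun y : ℝ => |y - x|/2) (𝓝[≠] x) (𝓝[>] 0) := by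
    rw [tendsto_nhdsWithin_iff]
    constructor
    · have hcont : Continuous (fun y : ℝ => |y - x|/2) :=
        ((continuous_id.sub continuous_const).abs).div_const 2
      have := (hcont.tendsto x).mono_left (nhdsWithin_le_nhds (s := {x}ᶜ))
      simpa using this
    · filter_upwards [eventually_mem_nhdsWithin] with y hy
      have : y ≠ x := hy
      have : |y - x| > 0 := abs_pos.2 (sub_ne_zero.2 this)
      exact mem_Ioi.2 (by linarith)
  have hmem : ∀ᶠ y : ℝ in 𝓝[≠] x, x ∈ Metric.closedBall ((x+y)/2) (1 * (|y - x|/2)) := by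
    filter_upwards with y
    rw [Metric.mem_closedBall, Real.dist_eq, one_mul,
      show x - (x+y)/2 = (x-y)/2 by ring, abs_div, abs_sub_comm]
    simp
  have hA0 : Tendsto A (𝓝[≠] x) (𝓝 0) := hx (fun y => (x+y)/2) (fun y => |y - x|/2) hδ hmem
  -- bound : for y ≠ x the difference quotient error is at most A y
  have hbound : ∀ y : ℝ, y ≠ x → ‖y - x‖⁻¹ * ‖P y - P x - (y - x) • g x‖ ≤ A y := by
    intro y hy
    have hPsub : P y - P x = ∫ u in x..y, g u := by
      rw [hP]
      exact intervalIntegral.integral_interval_sub_left hg.intervalIntegrable hg.intervalIntegrable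
    have hconst : (y - x) • g x = ∫ u in x..y, g x := by rw [intervalIntegral.integral_const]
    have hnum : P y - P x - (y - x) • g x = ∫ u in x..y, (g u - g x) := by
      rw [hPsub, hconst, intervalIntegral.integral_sub hg.intervalIntegrable
        (intervalIntegrable_const)]
    have hball : Metric.closedBall ((x+y)/2) (|y - x|/2) = Icc (min x y) (max x y) := by
      rw [Real.closedBall_eq_Icc]
      rcases le_or_gt x y with h | h
      · rw [abs_of_nonneg (by linarith : (0:ℝ) ≤ y - x), min_eq_left h, max_eq_right h]
        congr 1 <;> ring
      · rw [abs_of_neg (by linarith : y - x < 0), min_eq_right h.le, max_eq_left h.le]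
        congr 1 <;> ring
    have hAeq : A y = |y - x|⁻¹ * ∫ z in Ioc (min x y) (max x y), ‖g z - g x‖ := by
      rw [hA]
      simp only
      rw [setAverage_eq, hball, integral_Icc_eq_integral_Ioc, measureReal_def, Real.volume_Icc, smul_eq_mul]
      congr 1
      rw [ENNReal.toReal_ofReal (by rcases le_total x y with h|h <;> simp [max_eq_right, h,
        min_eq_left, max_eq_left, min_eq_right] <;> linarith)]
      rcases le_total x y with h | h
      · rw [min_eq_left h, max_eq_right h, abs_of_nonneg (by linarith : (0:ℝ) ≤ y - x)]
      · rw [min_eq_right h, max_eq_left h, abs_of_nonpos (by linarith : y - x ≤ 0)]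
        ring_nf
    rw [hnum, Real.norm_eq_abs, Real.norm_eq_abs]
    have hintsub : IntervalIntegrable (fun u => g u - g x) volume x y :=
      hg.intervalIntegrable.sub intervalIntegrable_const
    have h1 : |∫ u in x..y, (g u - g x)| ≤ ∫ z in Ioc (min x y) (max x y), ‖g z - g x‖ := by
      have := intervalIntegral.norm_integral_le_abs_integral_norm (f := fun u => g u - g x)
        (a := x) (b := y) (μ := volume)
      rw [Real.norm_eq_abs] at this
      refine this.trans ?_
      rcases le_total x y with h | h
      · rw [intervalIntegral.integral_of_le h, min_eq_left h, max_eq_right h]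
        rw [abs_of_nonneg (integral_nonneg fun z => norm_nonneg _)]
      · rw [intervalIntegral.integral_of_ge h, min_eq_right h, max_eq_left h, abs_neg]
        rw [abs_of_nonneg (integral_nonneg fun z => norm_nonneg _)]
    calc |y - x|⁻¹ * |∫ u in x..y, (g u - g x)|
        ≤ |y - x|⁻¹ * ∫ z in Ioc (min x y) (max x y), ‖g z - g x‖ :=
          mul_le_mul_of_nonneg_left h1 (inv_nonneg.2 (abs_nonneg _))
      _ = A y := hAeq.symm
  -- combine
  rw [← nhdsNE_sup_pure x, tendsto_sup]
  constructor
  · refine squeeze_zero' ?_ ?_ hA0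
    · filter_upwards with y using mul_nonneg (inv_nonneg.2 (norm_nonneg _)) (norm_nonneg _)
    · filter_upwards [eventually_mem_nhdsWithin] with y hy using hbound y hy
  · refine Filter.tendsto_pure_left.2 fun s hs => ?_
    have : ‖x - x‖⁻¹ * ‖P x - P x - (x - x) • g x‖ = 0 := by simp
    rw [this]
    exact mem_of_mem_nhds hs

/-- For `0 < α < 1`, `a < b`, `f` absolutely continuous on `[a,b]` with
`I_a^{1-α} f` absolutely continuous and `L = lim_{t→a⁺} (I_a^{1-α} f)(t)`, we have
`(I_a^α (D_a^{RL,α} f))(t) = f(t) - L / (Γ(α)(t-a)^{1-α})` for all `t ∈ (a,b)`. -/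
theorem rlInt_rlDeriv_eq (α a b L : ℝ) (hα0 : 0 < α) (hα1 : α < 1) (hab : a < b)
    (f : ℝ → ℝ) (hf : AbsContOn f a b)
    (hI : AbsContOn (rlInt a (1 - α) f) a b)
    (hL : Filter.Tendsto (rlInt a (1 - α) f) (nhdsWithin a (Set.Ioi a)) (nhds L)) :
    ∀ t ∈ Set.Ioo a b,
      rlInt a α (rlDeriv a α f) t = f t - L / (Real.Gamma α * (t - a) ^ (1 - α)) := by
  have hα1' : 0 < 1 - α := by linarith
  have hΓ1pos : 0 < Real.Gamma (1 - α) := Real.Gamma_pos_of_pos hα1'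
  have hΓ2pos : 0 < Real.Gamma (2 - α) := Real.Gamma_pos_of_pos (by linarith)
  have hΓαpos : 0 < Real.Gamma α := Real.Gamma_pos_of_pos hα0
  obtain ⟨h₀, hh₀int, hf_eq₀⟩ := hf
  have hh₀ : IntegrableOn h₀ (Ioc a b) volume :=
    (intervalIntegrable_iff_integrableOn_Ioc_of_le hab.le).1 hh₀int
  set h : ℝ → ℝ := hh₀.1.mk h₀ with hhdef
  have hm : Measurable h := hh₀.1.stronglyMeasurable_mk.measurable
  have hae : h₀ =ᵐ[volume.restrict (Ioc a b)] h := hh₀.1.ae_eq_mk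
  have hint : IntegrableOn h (Ioc a b) volume := hh₀.congr hae
  have hint' : ∀ s, s ≤ b → IntegrableOn h (Ioc a s) volume :=
    fun s hs => hint.mono_set (Ioc_subset_Ioc_right hs)
  have hf_eq : ∀ t ∈ Icc a b, f t = f a + ∫ τ in a..t, h τ := by
    intro t ht
    rw [hf_eq₀ t ht]
    congr 1
    refine intervalIntegral.integral_congr_ae ?_
    have := (ae_restrict_iff' measurableSet_Ioc).1 hae
    filter_upwards [this] with x hx hmem
    rw [uIoc_of_le ht.1] at hmem
    exact hx ⟨hmem.1, hmem.2.trans ht.2⟩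
  set F : ℝ → ℝ := rlInt a (1 - α) f with hFdef
  -- Step I : representation of F
  have hFrep : ∀ s ∈ Icc a b, F s
      = (f a / Real.Gamma (2 - α)) * (s - a) ^ (1 - α)
        + (1 / Real.Gamma (2 - α)) * ∫ u in a..s, (s - u) ^ (1 - α) * h u := by
    intro s hs
    rcases eq_or_lt_of_le hs.1 with rfl | has
    · simp [hFdef, rlInt, Real.zero_rpow hα1'.ne']
    have hIA : IntervalIntegrable
        (fun τ => (s - τ) ^ (1 - α - 1) * (τ - a) ^ (1 - (1:ℝ))) volume a s :=
      kernelIntble (1 - α) 1 hα1' one_pos has.le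
    have hIA' : IntervalIntegrable (fun τ => (s - τ) ^ (1 - α - 1) * f a) volume a s := by
      refine (hIA.mul_const (f a)).congr ?_
      intro τ _
      simp [Real.rpow_zero]
    have hfub := fub (t := s) (p := 1 - α) (q := 1) has hα1' one_pos (by linarith) hm
      (hint' s hs.2)
    simp only [sub_self, Real.rpow_zero, one_mul] at hfub
    obtain ⟨hIB, hfubval⟩ := hfub
    rw [show (1:ℝ) - α + 1 - 1 = 1 - α by ring, show (1:ℝ) - α + 1 = 2 - α by ring,
      Real.Gamma_one, mul_one] at hfubval
    have hIB' : IntervalIntegrable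
        (fun τ => (s - τ) ^ (1 - α - 1) * ∫ u in a..τ, h u) volume a s := by
      rw [intervalIntegrable_iff_integrableOn_Ioc_of_le has.le]
      exact hIB
    have e1 : ∫ τ in a..s, (s - τ) ^ (1 - α - 1) * f τ
        = (∫ τ in a..s, (s - τ) ^ (1 - α - 1) * f a)
          + ∫ τ in a..s, (s - τ) ^ (1 - α - 1) * ∫ u in a..τ, h u := by
      rw [← intervalIntegral.integral_add hIA' hIB']
      refine intervalIntegral.integral_congr fun τ hτ => ?_
      rw [uIcc_of_le has.le] at hτ
      rw [hf_eq τ ⟨hτ.1, hτ.2.trans hs.2⟩]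
      ring
    have k := kernelEval (u := a) (t := s) (1 - α) 1 hα1' one_pos has
    rw [show (1:ℝ) - α + 1 - 1 = 1 - α by ring, show (1:ℝ) - α + 1 = 2 - α by ring,
      Real.Gamma_one, mul_one] at k
    have e2 : ∫ τ in a..s, (s - τ) ^ (1 - α - 1) * f a
        = ((s - a) ^ (1 - α) * (Real.Gamma (1 - α) / Real.Gamma (2 - α))) * f a := by
      rw [← k, ← intervalIntegral.integral_mul_const]
      refine intervalIntegral.integral_congr fun τ _ => ?_
      simp [Real.rpow_zero]
    rw [hFdef]
    show (1 / Real.Gamma (1 - α)) * ∫ τ in a..s, (s - τ) ^ (1 - α - 1) * f τ = _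
    rw [e1, e2, hfubval]
    field_simp
  -- the candidate derivative
  set g₀ : ℝ → ℝ := fun u =>
    (f a / Real.Gamma (1 - α)) * (u - a) ^ (1 - α - 1)
      + (1 / Real.Gamma (1 - α)) * ∫ v in a..u, (u - v) ^ (1 - α - 1) * h v
    with hg₀def
  have hg₀A : ∀ s, a ≤ s → IntervalIntegrable
      (fun u => (f a / Real.Gamma (1 - α)) * (u - a) ^ (1 - α - 1)) volume a s := by
    intro s hs
    have h0 : IntervalIntegrable (fun x : ℝ => x ^ (1 - α - 1)) volume 0 (s - a) :=
      intervalIntegral.intervalIntegrable_rpow' (by linarith)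
    have h1 := h0.comp_sub_right a
    rw [zero_add, sub_add_cancel] at h1
    exact h1.const_mul _
  have hg₀B : ∀ s, a < s → s ≤ b → IntervalIntegrable
      (fun u => (1 / Real.Gamma (1 - α)) * ∫ v in a..u, (u - v) ^ (1 - α - 1) * h v)
      volume a s := by
    intro s has hsb
    have hfub := (fub (t := s) (p := 1) (q := 1 - α) has one_pos hα1' (by linarith) hm
      (hint' s hsb)).1
    simp only [sub_self, Real.rpow_zero, one_mul] at hfub
    rw [intervalIntegrable_iff_integrableOn_Ioc_of_le has.le]
    exact hfub.const_mul _
  -- Step II : F is the primitive of g₀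
  have hprim : ∀ s ∈ Icc a b, ∫ u in a..s, g₀ u = F s := by
    intro s hs
    rcases eq_or_lt_of_le hs.1 with rfl | has
    · simp [hFdef, rlInt]
    have hsplit : ∫ u in a..s, g₀ u
        = (∫ u in a..s, (f a / Real.Gamma (1 - α)) * (u - a) ^ (1 - α - 1))
          + ∫ u in a..s, (1 / Real.Gamma (1 - α)) * ∫ v in a..u, (u - v) ^ (1 - α - 1) * h v := by
      rw [← intervalIntegral.integral_add (hg₀A s has.le) (hg₀B s has hs.2)]
    have k := kernelEval (u := a) (t := s) 1 (1 - α) one_pos hα1' has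
    rw [show (1:ℝ) + (1 - α) - 1 = 1 - α by ring, show (1:ℝ) + (1 - α) = 2 - α by ring,
      Real.Gamma_one, one_mul] at k
    have e1 : ∫ u in a..s, (f a / Real.Gamma (1 - α)) * (u - a) ^ (1 - α - 1)
        = (f a / Real.Gamma (1 - α))
          * ((s - a) ^ (1 - α) * (Real.Gamma (1 - α) / Real.Gamma (2 - α))) := by
      rw [intervalIntegral.integral_const_mul, ← k]
      congr 1
      refine intervalIntegral.integral_congr fun u _ => ?_
      simp [Real.rpow_zero]
    have hfubval := (fub (t := s) (p := 1) (q := 1 - α) has one_pos hα1' (by linarith) hm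
      (hint' s hs.2)).2
    simp only [sub_self, Real.rpow_zero, one_mul] at hfubval
    rw [show (1:ℝ) + (1 - α) - 1 = 1 - α by ring, show (1:ℝ) + (1 - α) = 2 - α by ring,
      Real.Gamma_one, one_mul] at hfubval
    have e2 : ∫ u in a..s, (1 / Real.Gamma (1 - α)) * ∫ v in a..u, (u - v) ^ (1 - α - 1) * h v
        = (1 / Real.Gamma (1 - α)) * ((Real.Gamma (1 - α) / Real.Gamma (2 - α))
          * ∫ v in a..s, (s - v) ^ (1 - α) * h v) := by
      rw [intervalIntegral.integral_const_mul, hfubval]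
    rw [hsplit, e1, e2, hFrep s hs]
    field_simp
  -- Step III/IV : global primitive
  set G : ℝ → ℝ := (Ioc a b).indicator g₀ with hGdef
  have hGint : Integrable G volume := by
    rw [hGdef, integrable_indicator_iff measurableSet_Ioc]
    rw [← intervalIntegrable_iff_integrableOn_Ioc_of_le hab.le]
    exact (hg₀A b hab.le).add (hg₀B b hab le_rfl)
  have hPG : ∀ y ∈ Icc a b, ∫ u in a..y, G u = ∫ u in a..y, g₀ u := by
    intro y hy
    refine intervalIntegral.integral_congr_ae ?_
    filter_upwards with x hx
    rw [uIoc_of_le hy.1] at hx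
    exact indicator_of_mem (mem_Ioc.2 ⟨hx.1, hx.2.trans hy.2⟩) g₀
  have hFP : ∀ y ∈ Icc a b, F y = ∫ u in a..y, G u := by
    intro y hy
    rw [hPG y hy, hprim y hy]
  -- Step V : L = 0
  have hL0 : L = 0 := by
    have hPcont : Continuous (fun y => ∫ u in a..y, G u) :=
      intervalIntegral.continuous_primitive (fun _ _ => hGint.intervalIntegrable) a
    have h2 : Tendsto (fun y => ∫ u in a..y, G u) (𝓝[>] a) (𝓝 0) := by
      have := (hPcont.tendsto a).mono_left (nhdsWithin_le_nhds (s := Ioi a))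
      simpa using this
    have hFtend : Tendsto F (𝓝[>] a) (𝓝 0) := by
      refine h2.congr' ?_
      filter_upwards [Ioo_mem_nhdsGT_of_mem (left_mem_Ico.2 hab)] with y hy
      exact (hFP y ⟨hy.1.le, hy.2.le⟩).symm
    exact tendsto_nhds_unique hL hFtend
  -- Step VI : a.e. derivative of F
  have hderiv : ∀ᵐ x : ℝ, x ∈ Ioo a b → deriv F x = g₀ x := by
    filter_upwards [ae_hasDerivAt_primitive a hGint] with x hx hxmem
    have hcong : F =ᶠ[𝓝 x] (fun y => ∫ u in a..y, G u) := by
      filter_upwards [isOpen_Ioo.mem_nhds hxmem] with y hy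
      exact hFP y ⟨hy.1.le, hy.2.le⟩
    have hd : HasDerivAt F (G x) x := hx.congr_of_eventuallyEq hcong
    rw [hd.deriv, hGdef, indicator_of_mem (mem_Ioc.2 ⟨hxmem.1, hxmem.2.le⟩)]
  -- Step VII : final computation
  intro t ht
  obtain ⟨hta, htb⟩ := ht
  have hnet : ∀ᵐ s : ℝ, s ≠ t := by
    refine (ae_iff).2 ?_
    have he : {s : ℝ | ¬ s ≠ t} = {t} := by ext x; simp
    rw [he]
    exact Real.volume_singleton
  have step1 : ∫ s in a..t, (t - s) ^ (α - 1) * rlDeriv a α f s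
      = ∫ s in a..t, (t - s) ^ (α - 1) * g₀ s := by
    refine intervalIntegral.integral_congr_ae ?_
    filter_upwards [hderiv, hnet] with s h1 h2 hmem
    rw [uIoc_of_le hta.le] at hmem
    have hs : s ∈ Ioo a b := ⟨hmem.1, lt_of_lt_of_le (lt_of_le_of_ne hmem.2 h2) htb.le⟩
    show (t - s) ^ (α - 1) * deriv F s = _
    rw [h1 hs]
  have hIA : IntervalIntegrable
      (fun s => (f a / Real.Gamma (1 - α)) * ((t - s) ^ (α - 1) * (s - a) ^ (1 - α - 1)))
      volume a t :=
    (kernelIntble α (1 - α) hα0 hα1' hta.le).const_mul _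
  have hfub := fub (t := t) (p := α) (q := 1 - α) hta hα0 hα1' (by linarith) hm
    (hint' t htb.le)
  obtain ⟨hIBraw, hfubval⟩ := hfub
  rw [show α + (1 - α) - 1 = 0 by ring, show α + (1 - α) = 1 by ring,
    Real.Gamma_one, div_one] at hfubval
  simp only [Real.rpow_zero, one_mul] at hfubval
  have hIB : IntervalIntegrable
      (fun s => (1 / Real.Gamma (1 - α))
        * ((t - s) ^ (α - 1) * ∫ v in a..s, (s - v) ^ (1 - α - 1) * h v)) volume a t := by
    rw [intervalIntegrable_iff_integrableOn_Ioc_of_le hta.le]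
    exact hIBraw.const_mul _
  have k := kernelEval (u := a) (t := t) α (1 - α) hα0 hα1' hta
  rw [show α + (1 - α) - 1 = 0 by ring, show α + (1 - α) = 1 by ring,
    Real.Gamma_one, div_one, Real.rpow_zero, one_mul] at k
  have step2 : ∫ s in a..t, (t - s) ^ (α - 1) * g₀ s = Real.Gamma α * f t := by
    have e0 : ∫ s in a..t, (t - s) ^ (α - 1) * g₀ s
        = (∫ s in a..t, (f a / Real.Gamma (1 - α)) * ((t - s) ^ (α - 1) * (s - a) ^ (1 - α - 1)))
          + ∫ s in a..t, (1 / Real.Gamma (1 - α))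
            * ((t - s) ^ (α - 1) * ∫ v in a..s, (s - v) ^ (1 - α - 1) * h v) := by
      rw [← intervalIntegral.integral_add hIA hIB]
      refine intervalIntegral.integral_congr fun s _ => ?_
      rw [hg₀def]
      ring
    have e1 : ∫ s in a..t, (f a / Real.Gamma (1 - α))
        * ((t - s) ^ (α - 1) * (s - a) ^ (1 - α - 1))
        = (f a / Real.Gamma (1 - α)) * (Real.Gamma α * Real.Gamma (1 - α)) := by
      rw [intervalIntegral.integral_const_mul, k]
    have e2 : ∫ s in a..t, (1 / Real.Gamma (1 - α))
        * ((t - s) ^ (α - 1) * ∫ v in a..s, (s - v) ^ (1 - α - 1) * h v)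
        = (1 / Real.Gamma (1 - α)) * ((Real.Gamma α * Real.Gamma (1 - α)) * ∫ u in a..t, h u) := by
      rw [intervalIntegral.integral_const_mul, hfubval]
    rw [e0, e1, e2, hf_eq t ⟨hta.le, htb.le⟩]
    field_simp
  rw [hL0]
  show (1 / Real.Gamma α) * ∫ s in a..t, (t - s) ^ (α - 1) * rlDeriv a α f s = _
  rw [step1, step2, zero_div, sub_zero]
  field_simp
end

section
/- Let a < b be real numbers and f ∈ L¹(a,b). Then for almost every t ∈ (a,b), the Riemann–Liouville fractional integral of f of order α converges to f(t) as α decreases to 0: lim_{α→0⁺} (1/Γ(α)) ∫_a^t (t-τ)^{α-1} f(τ) dτ = f(t). -/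
open MeasureTheory Filter Topology Set
open scoped ENNReal

lemma inner_kernel_eq {α δ s : ℝ} (hα1 : α < 1) (hs : 0 < s) (hsδ : s ≤ δ) :
    ENNReal.ofReal (s ^ (α - 1)) =
      ENNReal.ofReal (δ ^ (α - 1)) +
        ENNReal.ofReal (1 - α) * ∫⁻ r in Set.Ioc s δ, ENNReal.ofReal (r ^ (α - 2)) := by
  have hδ : 0 < δ := hs.trans_le hsδ
  have h0m : (0:ℝ) ∉ Set.uIcc s δ := by
    rw [Set.uIcc_of_le hsδ]
    exact fun h => absurd h.1 (not_le.mpr hs)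
  have hint : IntervalIntegrable (fun r : ℝ => r ^ (α - 2)) volume s δ :=
    intervalIntegral.intervalIntegrable_rpow (Or.inr h0m)
  have hIoc : IntegrableOn (fun r : ℝ => r ^ (α - 2)) (Set.Ioc s δ) volume := by
    rw [intervalIntegrable_iff, Set.uIoc_of_le hsδ] at hint; exact hint
  have hnn : 0 ≤ᵐ[volume.restrict (Set.Ioc s δ)] fun r : ℝ => r ^ (α - 2) := by
    filter_upwards [self_mem_ae_restrict measurableSet_Ioc] with r hr
    exact Real.rpow_nonneg (le_of_lt (hs.trans hr.1)) _
  rw [← ofReal_integral_eq_lintegral_ofReal hIoc hnn]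
  have hval : ∫ r in Set.Ioc s δ, r ^ (α - 2) = (s ^ (α-1) - δ ^ (α-1)) / (1 - α) := by
    rw [← intervalIntegral.integral_of_le hsδ,
      integral_rpow (Or.inr ⟨by intro h; nlinarith [h ▸ (rfl : α - 2 = α - 2)], h0m⟩)]
    have : α - 2 + 1 = α - 1 := by ring
    rw [this]
    rw [div_eq_div_iff (by linarith) (by linarith)]
    ring
  rw [hval, ← ENNReal.ofReal_mul (by linarith)]
  have h1 : (1 - α) * ((s ^ (α-1) - δ ^ (α-1)) / (1 - α)) = s ^ (α-1) - δ ^ (α-1) := by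
    rw [mul_comm, div_mul_cancel₀]
    linarith
  rw [h1, ← ENNReal.ofReal_add (Real.rpow_nonneg hδ.le _) (by
    have : δ ^ (α-1) ≤ s ^ (α-1) := Real.rpow_le_rpow_of_nonpos hs hsδ (by linarith)
    linarith)]
  congr 1; ring

lemma near_bound {t δ α c : ℝ} (hδ : 0 < δ) (hα : 0 < α) (hα1 : α < 1) (hc : 0 ≤ c)
    {h : ℝ → ℝ} (hm : Measurable h) (h0 : ∀ x, 0 ≤ h x)
    (hH : ∀ r, 0 < r → r ≤ δ →
      ∫⁻ τ in Set.Ioc (t - r) t, ENNReal.ofReal (h τ) ≤ ENNReal.ofReal (c * r)) :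
    ∫⁻ τ in Set.Ioc (t - δ) t, ENNReal.ofReal ((t - τ) ^ (α - 1)) * ENNReal.ofReal (h τ)
      ≤ ENNReal.ofReal (c * δ ^ α / α) := by
  set g : ℝ → ℝ≥0∞ := fun r => ENNReal.ofReal (r ^ (α - 2)) with hg
  set J : ℝ → ℝ≥0∞ := fun τ => ∫⁻ r in Set.Ioc 0 δ, (Set.Ioi (t - τ)).indicator g r with hJ
  -- move to Ioo
  rw [← setLIntegral_congr (Ioo_ae_eq_Ioc (a := t - δ) (b := t))]
  -- pointwise rewrite of the kernel
  have hpt : ∀ τ ∈ Set.Ioo (t - δ) t,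
      ENNReal.ofReal ((t - τ) ^ (α - 1)) * ENNReal.ofReal (h τ) =
        (ENNReal.ofReal (δ ^ (α - 1)) + ENNReal.ofReal (1 - α) * J τ) * ENNReal.ofReal (h τ) := by
    intro τ hτ
    have hs : 0 < t - τ := by linarith [hτ.2]
    have hsδ : t - τ ≤ δ := by linarith [hτ.1]
    have hset : Set.Ioc (t - τ) δ = Set.Ioi (t - τ) ∩ Set.Ioc 0 δ := by
      ext r
      simp only [Set.mem_Ioc, Set.mem_inter_iff, Set.mem_Ioi]
      constructor
      · rintro ⟨h1, h2⟩; exact ⟨h1, hs.trans h1, h2⟩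
      · rintro ⟨h1, _, h2⟩; exact ⟨h1, h2⟩
    have hJτ : (∫⁻ r in Set.Ioc (t - τ) δ, g r) = J τ := by
      show _ = ∫⁻ r in Set.Ioc 0 δ, (Set.Ioi (t - τ)).indicator g r
      rw [lintegral_indicator measurableSet_Ioi, Measure.restrict_restrict measurableSet_Ioi,
        ← hset]
    rw [← hJτ, ← inner_kernel_eq hα1 hs hsδ]
  rw [setLIntegral_congr_fun measurableSet_Ioo hpt]
  -- distribute
  have hmeas1 : Measurable fun τ => ENNReal.ofReal (δ ^ (α - 1)) * ENNReal.ofReal (h τ) :=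
    (hm.ennreal_ofReal).const_mul _
  simp_rw [add_mul]
  rw [lintegral_add_left hmeas1]
  -- T1 bound
  have hIooIoc : ∀ r : ℝ, (∫⁻ τ in Set.Ioo (t - r) t, ENNReal.ofReal (h τ)) =
      ∫⁻ τ in Set.Ioc (t - r) t, ENNReal.ofReal (h τ) :=
    fun r => setLIntegral_congr (Ioo_ae_eq_Ioc)
  have hT1 : (∫⁻ τ in Set.Ioo (t - δ) t,
      ENNReal.ofReal (δ ^ (α - 1)) * ENNReal.ofReal (h τ)) ≤
      ENNReal.ofReal (δ ^ (α - 1) * (c * δ)) := by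
    rw [lintegral_const_mul' _ _ ENNReal.ofReal_ne_top, ENNReal.ofReal_mul
      (Real.rpow_nonneg hδ.le _)]
    exact mul_le_mul_right (by rw [hIooIoc]; exact hH δ hδ le_rfl) _
  -- T2 bound
  have hT2 : (∫⁻ τ in Set.Ioo (t - δ) t, ENNReal.ofReal (1 - α) * J τ * ENNReal.ofReal (h τ))
      ≤ ENNReal.ofReal (1 - α) * ENNReal.ofReal (c * (δ ^ α / α)) := by
    simp_rw [mul_assoc]
    rw [lintegral_const_mul' _ _ ENNReal.ofReal_ne_top]
    refine mul_le_mul_right ?_ _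
    -- Tonelli
    have hswap : (∫⁻ τ in Set.Ioo (t - δ) t, J τ * ENNReal.ofReal (h τ)) =
        ∫⁻ r in Set.Ioc 0 δ, ∫⁻ τ in Set.Ioo (t - δ) t,
          (Set.Ioi (t - τ)).indicator g r * ENNReal.ofReal (h τ) := by
      have hpt2 : ∀ τ, J τ * ENNReal.ofReal (h τ) =
          ∫⁻ r in Set.Ioc 0 δ, (Set.Ioi (t - τ)).indicator g r * ENNReal.ofReal (h τ) := by
        intro τ
        rw [hJ, ← lintegral_mul_const' _ _ ENNReal.ofReal_ne_top]
      simp_rw [hpt2]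
      refine lintegral_lintegral_swap ?_
      have heq : (Function.uncurry fun τ r => (Set.Ioi (t - τ)).indicator g r *
          ENNReal.ofReal (h τ)) = fun p : ℝ × ℝ =>
          ({q : ℝ × ℝ | t - q.1 < q.2}.indicator (fun q => g q.2) p) * ENNReal.ofReal (h p.1) := by
        ext ⟨τ, r⟩
        simp only [Function.uncurry_apply_pair]
        by_cases hcond : t - τ < r
        · rw [Set.indicator_of_mem (Set.mem_Ioi.mpr hcond),
            Set.indicator_of_mem (by exact hcond)]
        · rw [Set.indicator_of_notMem (fun hx => hcond (Set.mem_Ioi.mp hx)),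
            Set.indicator_of_notMem (by exact hcond)]
      rw [heq]
      refine Measurable.aemeasurable ?_
      refine Measurable.mul ?_ ((hm.comp measurable_fst).ennreal_ofReal)
      refine Measurable.indicator ((measurable_snd.pow_const _).ennreal_ofReal) ?_
      exact measurableSet_lt (measurable_const.sub measurable_fst) measurable_snd
    rw [hswap]
    -- bound inner integral for each r
    have hinner : ∀ r ∈ Set.Ioc (0:ℝ) δ, (∫⁻ τ in Set.Ioo (t - δ) t,
        (Set.Ioi (t - τ)).indicator g r * ENNReal.ofReal (h τ)) ≤
        ENNReal.ofReal (c * r ^ (α - 1)) := by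
      intro r hr
      have hind : ∀ τ, (Set.Ioi (t - τ)).indicator g r * ENNReal.ofReal (h τ) =
          (Set.Ioi (t - r)).indicator (fun τ => g r * ENNReal.ofReal (h τ)) τ := by
        intro τ
        by_cases hcond : t - τ < r
        · rw [Set.indicator_of_mem (Set.mem_Ioi.mpr hcond),
            Set.indicator_of_mem (Set.mem_Ioi.mpr (by linarith))]
        · rw [Set.indicator_of_notMem (fun hx => hcond (Set.mem_Ioi.mp hx)),
            Set.indicator_of_notMem (fun hx => hcond (by have := Set.mem_Ioi.mp hx; linarith)),
            zero_mul]
      simp_rw [hind]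
      rw [lintegral_indicator measurableSet_Ioi, Measure.restrict_restrict measurableSet_Ioi]
      have hset2 : Set.Ioi (t - r) ∩ Set.Ioo (t - δ) t = Set.Ioo (t - r) t := by
        ext τ
        simp only [Set.mem_inter_iff, Set.mem_Ioi, Set.mem_Ioo]
        constructor
        · rintro ⟨h1, _, h3⟩; exact ⟨h1, h3⟩
        · rintro ⟨h1, h2⟩; exact ⟨h1, by linarith [hr.2], h2⟩
      rw [hset2, lintegral_const_mul' _ _ ENNReal.ofReal_ne_top, hIooIoc]
      calc g r * ∫⁻ τ in Set.Ioc (t - r) t, ENNReal.ofReal (h τ)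
          ≤ g r * ENNReal.ofReal (c * r) := mul_le_mul_right (hH r hr.1 hr.2) _
        _ = ENNReal.ofReal (c * r ^ (α - 1)) := by
            rw [hg, ← ENNReal.ofReal_mul (Real.rpow_nonneg hr.1.le _)]
            congr 1
            have hr1 : r ^ (α - 2) * r = r ^ (α - 1) := by
              have := Real.rpow_add_one (ne_of_gt hr.1) (α - 2)
              rw [show α - 2 + 1 = α - 1 by ring] at this
              rw [this]
            calc r ^ (α - 2) * (c * r) = c * (r ^ (α - 2) * r) := by ring
              _ = c * r ^ (α - 1) := by rw [hr1]
    calc (∫⁻ r in Set.Ioc 0 δ, ∫⁻ τ in Set.Ioo (t - δ) t,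
          (Set.Ioi (t - τ)).indicator g r * ENNReal.ofReal (h τ))
        ≤ ∫⁻ r in Set.Ioc 0 δ, ENNReal.ofReal (c * r ^ (α - 1)) :=
          setLIntegral_mono (((measurable_id.pow_const _).const_mul c).ennreal_ofReal) hinner
      _ = ENNReal.ofReal (c * (δ ^ α / α)) := by
          have hint : IntegrableOn (fun r : ℝ => c * r ^ (α - 1)) (Set.Ioc 0 δ) volume := by
            have := (intervalIntegral.intervalIntegrable_rpow' (a := 0) (b := δ)
              (r := α - 1) (by linarith)).const_mul c
            rw [intervalIntegrable_iff, Set.uIoc_of_le hδ.le] at this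
            exact this
          have hnn : 0 ≤ᵐ[volume.restrict (Set.Ioc 0 δ)] fun r : ℝ => c * r ^ (α - 1) := by
            filter_upwards [self_mem_ae_restrict measurableSet_Ioc] with r hr
            exact mul_nonneg hc (Real.rpow_nonneg hr.1.le _)
          rw [← ofReal_integral_eq_lintegral_ofReal hint hnn]
          congr 1
          rw [← intervalIntegral.integral_of_le hδ.le, intervalIntegral.integral_const_mul,
            integral_rpow (Or.inl (by linarith))]
          rw [show α - 1 + 1 = α by ring, Real.zero_rpow (ne_of_gt hα), sub_zero]
  calc _ ≤ ENNReal.ofReal (δ ^ (α - 1) * (c * δ)) +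
        ENNReal.ofReal (1 - α) * ENNReal.ofReal (c * (δ ^ α / α)) := add_le_add hT1 hT2
    _ = ENNReal.ofReal (δ ^ (α - 1) * (c * δ) + (1 - α) * (c * (δ ^ α / α))) := by
        rw [← ENNReal.ofReal_mul (by linarith), ← ENNReal.ofReal_add]
        · exact mul_nonneg (Real.rpow_nonneg hδ.le _) (mul_nonneg hc hδ.le)
        · exact mul_nonneg (by linarith) (mul_nonneg hc
            (div_nonneg (Real.rpow_nonneg hδ.le _) hα.le))
    _ = ENNReal.ofReal (c * δ ^ α / α) := by
        congr 1
        have hX : δ ^ (α - 1) * δ = δ ^ α := by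
          have := Real.rpow_add_one (ne_of_gt hδ) (α - 1)
          rw [show α - 1 + 1 = α by ring] at this
          rw [this]
        have h1 : δ ^ (α - 1) * (c * δ) = c * δ ^ α := by
          calc δ ^ (α - 1) * (c * δ) = c * (δ ^ (α - 1) * δ) := by ring
            _ = c * δ ^ α := by rw [hX]
        rw [h1]
        field_simp
        ring

lemma key {g : ℝ → ℝ} (hgm : Measurable g) (hg : Integrable g volume) {a t : ℝ} (hat : a < t)
    (hleb : Tendsto (fun r => ⨍ y in Metric.closedBall t r, ‖g y - g t‖) (𝓝[>] (0:ℝ)) (𝓝 0)) :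
    Tendsto (fun α : ℝ => (1 / Real.Gamma α) * ∫ τ in a..t, (t - τ) ^ (α - 1) * g τ)
      (𝓝[>] (0:ℝ)) (𝓝 (g t)) := by
  set h : ℝ → ℝ := fun τ => ‖g τ - g t‖ with hh
  have hmh : Measurable h := (hgm.sub measurable_const).norm
  have h0 : ∀ x, 0 ≤ h x := fun x => norm_nonneg _
  have hhI : ∀ s : Set ℝ, volume s ≠ ⊤ → IntegrableOn h s volume :=
    fun s hs => ((hg.integrableOn.sub (integrableOn_const hs)).norm)
  -- Lebesgue point quantitative bound
  have hHfact : ∀ ε' : ℝ, 0 < ε' → ∃ δ : ℝ, 0 < δ ∧ δ ≤ t - a ∧ ∀ r, 0 < r → r ≤ δ →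
      ∫⁻ τ in Set.Ioc (t - r) t, ENNReal.ofReal (h τ) ≤ ENNReal.ofReal (2 * ε' * r) := by
    intro ε' hε'
    have hev : ∀ᶠ r in 𝓝[>] (0:ℝ), ⨍ y in Metric.closedBall t r, ‖g y - g t‖ < ε' :=
      hleb.eventually_lt_const hε'
    obtain ⟨δ₀, hδ₀, hball⟩ := Metric.mem_nhdsWithin_iff.mp hev
    refine ⟨min (δ₀ / 2) (t - a), lt_min (by positivity) (by linarith), min_le_right _ _, ?_⟩
    intro r hr hrδ
    have hrδ₀ : r < δ₀ := by
      have := le_trans hrδ (min_le_left _ _); linarith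
    have havg : ⨍ y in Metric.closedBall t r, ‖g y - g t‖ < ε' := by
      refine hball ⟨?_, hr⟩
      rw [Metric.mem_ball, Real.dist_eq, sub_zero, abs_of_pos hr]; exact hrδ₀
    have hvol : volume (Metric.closedBall t r) ≠ ⊤ := by
      rw [Real.volume_closedBall]; exact ENNReal.ofReal_ne_top
    have hint : IntegrableOn h (Metric.closedBall t r) volume := hhI _ hvol
    have hsub : Set.Ioc (t - r) t ⊆ Metric.closedBall t r := by
      intro x hx
      rw [Real.closedBall_eq_Icc]
      exact ⟨by linarith [hx.1], by linarith [hx.2]⟩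
    calc ∫⁻ τ in Set.Ioc (t - r) t, ENNReal.ofReal (h τ)
        ≤ ∫⁻ τ in Metric.closedBall t r, ENNReal.ofReal (h τ) := lintegral_mono_set hsub
      _ = ENNReal.ofReal (∫ τ in Metric.closedBall t r, h τ) :=
          (ofReal_integral_eq_lintegral_ofReal hint (ae_of_all _ h0)).symm
      _ ≤ ENNReal.ofReal (2 * ε' * r) := by
          refine ENNReal.ofReal_le_ofReal ?_
          have havg' := havg
          rw [setAverage_eq, Real.volume_real_closedBall hr.le,
            smul_eq_mul] at havg'
          have h2r : (0:ℝ) < 2 * r := by linarith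
          rw [inv_mul_lt_iff₀ h2r] at havg'
          nlinarith
  -- total mass
  have hA : IntegrableOn h (Set.Ioc a t) volume :=
    hhI _ (by rw [Real.volume_Ioc]; exact ENNReal.ofReal_ne_top)
  set A : ℝ := ∫ τ in Set.Ioc a t, h τ with hA_def
  have hA0 : 0 ≤ A := setIntegral_nonneg measurableSet_Ioc (fun x _ => h0 x)
  have hAeq : ∫⁻ τ in Set.Ioc a t, ENNReal.ofReal (h τ) = ENNReal.ofReal A :=
    (ofReal_integral_eq_lintegral_ofReal hA (ae_of_all _ h0)).symm
  -- total lintegral bound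
  have hL : ∀ α ∈ Set.Ioo (0:ℝ) 1, ∀ δ c : ℝ, 0 < δ → δ ≤ t - a → 0 ≤ c →
      (∀ r, 0 < r → r ≤ δ →
        ∫⁻ τ in Set.Ioc (t - r) t, ENNReal.ofReal (h τ) ≤ ENNReal.ofReal (c * r)) →
      ∫⁻ τ in Set.Ioc a t, ENNReal.ofReal ((t - τ) ^ (α - 1)) * ENNReal.ofReal (h τ)
        ≤ ENNReal.ofReal (δ ^ (α - 1) * A + c * δ ^ α / α) := by
    intro α hα δ c hδ hδt hc hH
    have hsplit : Set.Ioc a t = Set.Ioc a (t - δ) ∪ Set.Ioc (t - δ) t :=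
      (Set.Ioc_union_Ioc_eq_Ioc (by linarith) (by linarith)).symm
    rw [hsplit, lintegral_union measurableSet_Ioc (Set.Ioc_disjoint_Ioc_of_le le_rfl)]
    have hfar : ∫⁻ τ in Set.Ioc a (t - δ),
        ENNReal.ofReal ((t - τ) ^ (α - 1)) * ENNReal.ofReal (h τ)
        ≤ ENNReal.ofReal (δ ^ (α - 1) * A) := by
      have hmono : ∀ τ ∈ Set.Ioc a (t - δ),
          ENNReal.ofReal ((t - τ) ^ (α - 1)) * ENNReal.ofReal (h τ)
            ≤ ENNReal.ofReal (δ ^ (α - 1)) * ENNReal.ofReal (h τ) := by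
        intro τ hτ
        refine mul_le_mul_left (ENNReal.ofReal_le_ofReal ?_) _
        exact Real.rpow_le_rpow_of_nonpos hδ (by linarith [hτ.2]) (by linarith [hα.2])
      calc _ ≤ ∫⁻ τ in Set.Ioc a (t - δ),
            ENNReal.ofReal (δ ^ (α - 1)) * ENNReal.ofReal (h τ) :=
            setLIntegral_mono (hmh.ennreal_ofReal.const_mul _) hmono
        _ = ENNReal.ofReal (δ ^ (α - 1)) * ∫⁻ τ in Set.Ioc a (t - δ), ENNReal.ofReal (h τ) :=
            lintegral_const_mul' _ _ ENNReal.ofReal_ne_top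
        _ ≤ ENNReal.ofReal (δ ^ (α - 1)) * ENNReal.ofReal A := by
            refine mul_le_mul_right ?_ _
            rw [← hAeq]
            exact lintegral_mono_set (Set.Ioc_subset_Ioc_right (by linarith))
        _ = ENNReal.ofReal (δ ^ (α - 1) * A) :=
            (ENNReal.ofReal_mul (Real.rpow_nonneg hδ.le _)).symm
    have hnear := near_bound hδ hα.1 hα.2 hc hmh h0 hH
    calc _ ≤ ENNReal.ofReal (δ ^ (α - 1) * A) + ENNReal.ofReal (c * δ ^ α / α) :=
          add_le_add hfar hnear
      _ = _ := (ENNReal.ofReal_add (mul_nonneg (Real.rpow_nonneg hδ.le _) hA0)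
          (div_nonneg (mul_nonneg hc (Real.rpow_nonneg hδ.le _)) (le_of_lt hα.1))).symm
  -- kernel integrability and value
  have hker : ∀ α : ℝ, 0 < α → IntervalIntegrable (fun τ => (t - τ) ^ (α - 1)) volume a t := by
    intro α hα
    have h1 : IntervalIntegrable (fun s : ℝ => s ^ (α - 1)) volume 0 (t - a) :=
      intervalIntegral.intervalIntegrable_rpow' (by linarith)
    have h2 := h1.comp_sub_left t
    rw [sub_zero, sub_sub_cancel] at h2
    exact h2.symm
  have hkerval : ∀ α : ℝ, 0 < α → (∫ τ in a..t, (t - τ) ^ (α - 1)) = (t - a) ^ α / α := by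
    intro α hα
    rw [intervalIntegral.integral_comp_sub_left (fun s => s ^ (α - 1)) t, sub_self,
      integral_rpow (Or.inl (by linarith)), show α - 1 + 1 = α by ring,
      Real.zero_rpow (ne_of_gt hα), sub_zero]
  -- pointwise norm identity on Ioc a t
  have hnormid : ∀ α : ℝ, ∀ τ ∈ Set.Ioc a t,
      ENNReal.ofReal ‖(t - τ) ^ (α - 1) * (g τ - g t)‖ =
        ENNReal.ofReal ((t - τ) ^ (α - 1)) * ENNReal.ofReal (h τ) := by
    intro α τ hτ
    rw [norm_mul, Real.norm_eq_abs ((t - τ) ^ (α - 1)),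
      abs_of_nonneg (Real.rpow_nonneg (by linarith [hτ.2]) _),
      ENNReal.ofReal_mul (Real.rpow_nonneg (by linarith [hτ.2]) _)]
  -- δ₁ for integrability
  obtain ⟨δ₁, hδ₁, hδ₁t, hH₁⟩ := hHfact 1 one_pos
  have hKg : ∀ α ∈ Set.Ioo (0:ℝ) 1,
      IntervalIntegrable (fun τ => (t - τ) ^ (α - 1) * (g τ - g t)) volume a t := by
    intro α hα
    rw [intervalIntegrable_iff, Set.uIoc_of_le hat.le]
    constructor
    · exact (((measurable_const.sub measurable_id).pow_const _).mul
        (hgm.sub measurable_const)).aestronglyMeasurable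
    · rw [hasFiniteIntegral_iff_norm]
      calc ∫⁻ τ in Set.Ioc a t, ENNReal.ofReal ‖(t - τ) ^ (α - 1) * (g τ - g t)‖
          = ∫⁻ τ in Set.Ioc a t, ENNReal.ofReal ((t - τ) ^ (α - 1)) * ENNReal.ofReal (h τ) :=
            setLIntegral_congr_fun measurableSet_Ioc (hnormid α)
        _ ≤ ENNReal.ofReal (δ₁ ^ (α - 1) * A + 2 * δ₁ ^ α / α) := by
            refine hL α hα δ₁ 2 hδ₁ hδ₁t (by norm_num) ?_
            intro r hr hrδ
            have := hH₁ r hr hrδ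
            simpa [show 2 * 1 * r = 2 * r by ring] using this
        _ < ⊤ := ENNReal.ofReal_lt_top
  -- splitting
  have hsplit2 : ∀ α ∈ Set.Ioo (0:ℝ) 1,
      (1 / Real.Gamma α) * ∫ τ in a..t, (t - τ) ^ (α - 1) * g τ
        = ((1 / Real.Gamma α) * ∫ τ in a..t, (t - τ) ^ (α - 1) * (g τ - g t))
          + g t * ((t - a) ^ α / Real.Gamma (α + 1)) := by
    intro α hα
    have hΓ : 0 < Real.Gamma α := Real.Gamma_pos_of_pos hα.1
    have heq : Set.EqOn (fun τ => (t - τ) ^ (α - 1) * g τ)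
        (fun τ => (t - τ) ^ (α - 1) * (g τ - g t) + (t - τ) ^ (α - 1) * g t)
        (Set.uIcc a t) := fun τ _ => by ring
    rw [intervalIntegral.integral_congr heq,
      intervalIntegral.integral_add (hKg α hα) ((hker α hα.1).mul_const _),
      intervalIntegral.integral_mul_const, hkerval α hα.1,
      Real.Gamma_add_one (ne_of_gt hα.1)]
    field_simp [hΓ.ne', hα.1.ne']
  -- Gamma and rpow limits
  have hta : (0:ℝ) < t - a := by linarith
  have hG1 : Tendsto (fun α : ℝ => Real.Gamma (α + 1)) (𝓝 0) (𝓝 1) := by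
    have hc : ContinuousAt Real.Gamma 1 := by
      refine (Real.differentiableAt_Gamma fun m => ?_).continuousAt
      have h2 : -(m:ℝ) ≤ 0 := neg_nonpos.mpr (Nat.cast_nonneg m)
      exact (lt_of_le_of_lt h2 one_pos).ne'
    have h2 : Tendsto (fun α : ℝ => α + 1) (𝓝 0) (𝓝 ((0:ℝ) + 1)) :=
      ((continuous_id (X := ℝ)).add continuous_const).tendsto 0
    rw [zero_add] at h2
    have := hc.tendsto.comp h2; rw [Real.Gamma_one] at this; exact this
  -- M tendsto
  have hM : Tendsto (fun α : ℝ => g t * ((t - a) ^ α / Real.Gamma (α + 1)))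
      (𝓝[>] (0:ℝ)) (𝓝 (g t)) := by
    have h1 : Tendsto (fun α : ℝ => (t - a) ^ α) (𝓝 0) (𝓝 1) := by
      have := (Real.continuousAt_const_rpow (ne_of_gt hta) (b := 0)).tendsto
      simpa [Real.rpow_zero] using this
    have := tendsto_const_nhds (x := g t) |>.mul ((h1.div hG1 one_ne_zero))
    simp only [div_one, mul_one] at this
    exact this.mono_left nhdsWithin_le_nhds
  -- E tendsto
  have hE : Tendsto (fun α : ℝ =>
      (1 / Real.Gamma α) * ∫ τ in a..t, (t - τ) ^ (α - 1) * (g τ - g t))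
      (𝓝[>] (0:ℝ)) (𝓝 0) := by
    rw [Metric.tendsto_nhds]
    intro ε hε
    obtain ⟨δ, hδ, hδt, hH⟩ := hHfact (ε / 8) (by positivity)
    have hHc : ∀ r, 0 < r → r ≤ δ →
        ∫⁻ τ in Set.Ioc (t - r) t, ENNReal.ofReal (h τ) ≤ ENNReal.ofReal (ε / 4 * r) := by
      intro r hr hrδ
      have := hH r hr hrδ
      rw [show 2 * (ε / 8) * r = ε / 4 * r by ring] at this
      exact this
    -- pointwise bound
    have hbound : ∀ α ∈ Set.Ioo (0:ℝ) 1,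
        |(1 / Real.Gamma α) * ∫ τ in a..t, (t - τ) ^ (α - 1) * (g τ - g t)|
          ≤ (1 / Real.Gamma α) * (δ ^ (α - 1) * A + ε / 4 * δ ^ α / α) := by
      intro α hα
      have hΓ : 0 < Real.Gamma α := Real.Gamma_pos_of_pos hα.1
      rw [abs_mul, abs_of_pos (by positivity : (0:ℝ) < 1 / Real.Gamma α)]
      refine mul_le_mul_of_nonneg_left ?_ (by positivity)
      rw [intervalIntegral.integral_of_le hat.le, ← Real.norm_eq_abs]
      refine le_trans (norm_integral_le_lintegral_norm _) ?_
      refine ENNReal.toReal_le_of_le_ofReal ?_ ?_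
      · have h1 : 0 ≤ δ ^ (α - 1) * A := mul_nonneg (Real.rpow_nonneg hδ.le _) hA0
        have h2 : 0 ≤ ε / 4 * δ ^ α / α :=
          div_nonneg (mul_nonneg (by linarith) (Real.rpow_nonneg hδ.le _)) hα.1.le
        linarith
      · calc ∫⁻ τ in Set.Ioc a t, ENNReal.ofReal ‖(t - τ) ^ (α - 1) * (g τ - g t)‖
            = ∫⁻ τ in Set.Ioc a t,
                ENNReal.ofReal ((t - τ) ^ (α - 1)) * ENNReal.ofReal (h τ) :=
              setLIntegral_congr_fun measurableSet_Ioc (hnormid α)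
          _ ≤ _ := hL α hα δ (ε / 4) hδ hδt (by positivity) hHc
    -- limit of the bound
    set w : ℝ → ℝ := fun α =>
      α / Real.Gamma (α + 1) * (δ ^ (α - 1) * A) + ε / 4 * δ ^ α / Real.Gamma (α + 1)
      with hw_def
    have hw_eq : ∀ α ∈ Set.Ioo (0:ℝ) 1,
        (1 / Real.Gamma α) * (δ ^ (α - 1) * A + ε / 4 * δ ^ α / α) = w α := by
      intro α hα
      have hΓ : 0 < Real.Gamma α := Real.Gamma_pos_of_pos hα.1
      rw [hw_def]
      simp only
      rw [Real.Gamma_add_one (ne_of_gt hα.1)]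
      field_simp [hΓ.ne', hα.1.ne']
    have hw : Tendsto w (𝓝 0) (𝓝 (ε / 4)) := by
      have h3 : Tendsto (fun α : ℝ => δ ^ (α - 1)) (𝓝 0) (𝓝 (δ ^ ((0:ℝ) - 1))) := by
        have hcont := (Real.continuousAt_const_rpow (ne_of_gt hδ) (b := (0:ℝ) - 1)).tendsto
        have hsub : Tendsto (fun α : ℝ => α - 1) (𝓝 0) (𝓝 ((0:ℝ) - 1)) :=
          (continuous_id.sub continuous_const).tendsto 0
        exact hcont.comp hsub
      have h4 : Tendsto (fun α : ℝ => δ ^ α) (𝓝 (0:ℝ)) (𝓝 1) := by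
        have := (Real.continuousAt_const_rpow (ne_of_gt hδ) (b := (0:ℝ))).tendsto
        simpa [Real.rpow_zero] using this
      have h5 : Tendsto (fun α : ℝ => α / Real.Gamma (α + 1)) (𝓝 0) (𝓝 0) := by
        have hid : Tendsto (fun α : ℝ => α) (𝓝 0) (𝓝 0) := (continuous_id (X := ℝ)).tendsto 0
        have := hid.div hG1 one_ne_zero
        rw [zero_div] at this; exact this
      have h7 : Tendsto (fun α : ℝ => ε / 4 * δ ^ α / Real.Gamma (α + 1)) (𝓝 0)
          (𝓝 (ε / 4 * 1 / 1)) := by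
        simp only [div_eq_mul_inv]
        exact (h4.const_mul (ε / 4)).mul (hG1.inv₀ one_ne_zero)
      have h6 : Tendsto (fun α : ℝ => α / Real.Gamma (α + 1) * (δ ^ (α - 1) * A) +
          ε / 4 * δ ^ α / Real.Gamma (α + 1)) (𝓝 0)
          (𝓝 (0 * (δ ^ ((0:ℝ) - 1) * A) + ε / 4 * 1 / 1)) :=
        (h5.mul (h3.mul_const A)).add h7
      simpa using h6
    have hev2 : ∀ᶠ α in 𝓝[>] (0:ℝ), w α < ε / 2 :=
      (hw.mono_left nhdsWithin_le_nhds).eventually_lt_const (by linarith)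
    filter_upwards [hev2, Ioo_mem_nhdsGT_of_mem (Set.left_mem_Ico.mpr one_pos)] with α hα1 hα2
    rw [Real.dist_eq, sub_zero]
    calc |(1 / Real.Gamma α) * ∫ τ in a..t, (t - τ) ^ (α - 1) * (g τ - g t)|
        ≤ (1 / Real.Gamma α) * (δ ^ (α - 1) * A + ε / 4 * δ ^ α / α) := hbound α hα2
      _ = w α := hw_eq α hα2
      _ < ε / 2 := hα1
      _ < ε := by linarith
  -- combine
  have hfinal := hE.add hM
  rw [zero_add] at hfinal
  refine Tendsto.congr' ?_ hfinal
  filter_upwards [Ioo_mem_nhdsGT_of_mem (Set.left_mem_Ico.mpr one_pos)] with α hα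
  exact (hsplit2 α hα).symm

/-- For `f ∈ L¹(a,b)`, for a.e. `t ∈ (a,b)` the Riemann–Liouville
fractional integral converges to `f(t)` as the order decreases to `0`:
`(I_a^α f)(t) → f(t)` as `α → 0⁺`. -/
theorem rlInt_tendsto_self (a b : ℝ) (hab : a < b) (f : ℝ → ℝ)
    (hf : IntervalIntegrable f MeasureTheory.volume a b) :
    ∀ᵐ t ∂(MeasureTheory.volume.restrict (Set.Ioo a b)),
      Filter.Tendsto (fun α : ℝ => rlInt a α f t)
        (nhdsWithin 0 (Set.Ioi 0)) (nhds (f t)) := by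
  have hf' : IntegrableOn f (Set.Ioo a b) volume := by
    have h1 := (intervalIntegrable_iff).mp hf
    rw [Set.uIoc_of_le hab.le] at h1
    exact h1.mono_set Set.Ioo_subset_Ioc_self
  set g₀ : ℝ → ℝ := (Set.Ioo a b).indicator f with hg₀def
  have hg₀i : Integrable g₀ volume := (integrable_indicator_iff measurableSet_Ioo).mpr hf'
  set g : ℝ → ℝ := hg₀i.1.mk g₀ with hgdef
  have hgm : Measurable g := hg₀i.1.stronglyMeasurable_mk.measurable
  have hae : g₀ =ᵐ[volume] g := hg₀i.1.ae_eq_mk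
  have hgi : Integrable g volume := hg₀i.congr hae
  have hlebae := (Besicovitch.vitaliFamily (volume : Measure ℝ)).ae_tendsto_average_norm_sub
    hgi.locallyIntegrable
  filter_upwards [ae_restrict_of_ae hlebae, ae_restrict_of_ae hae,
    self_mem_ae_restrict measurableSet_Ioo] with t hlebt hgg htmem
  have hat : a < t := htmem.1
  have htb : t < b := htmem.2
  have hlebt' : Tendsto (fun r => ⨍ y in Metric.closedBall t r, ‖g y - g t‖)
      (𝓝[>] (0:ℝ)) (𝓝 0) := hlebt.comp (Besicovitch.tendsto_filterAt volume t)
  have hkey := key hgm hgi hat hlebt'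
  have hne2 : ∀ᵐ τ : ℝ ∂volume, τ ≠ t := by
    rw [ae_iff]
    have hset : {τ : ℝ | ¬τ ≠ t} = {t} := by ext τ; simp [not_not]
    rw [hset]
    exact measure_singleton t
  have hcong : ∀ α : ℝ, (∫ τ in a..t, (t - τ) ^ (α - 1) * f τ)
      = ∫ τ in a..t, (t - τ) ^ (α - 1) * g τ := by
    intro α
    refine intervalIntegral.integral_congr_ae ?_
    filter_upwards [hae, hne2] with τ h1 h2 hmem
    rw [Set.uIoc_of_le hat.le] at hmem
    have hτIoo : τ ∈ Set.Ioo a b := ⟨hmem.1, lt_of_lt_of_le (lt_of_le_of_ne hmem.2 h2) htb.le⟩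
    have : f τ = g τ := by
      rw [← h1, hg₀def, Set.indicator_of_mem hτIoo]
    rw [this]
  have hfg : f t = g t := by
    rw [← hgg, hg₀def, Set.indicator_of_mem htmem]
  have hfun : (fun α : ℝ => rlInt a α f t)
      = fun α : ℝ => (1 / Real.Gamma α) * ∫ τ in a..t, (t - τ) ^ (α - 1) * g τ := by
    funext α
    rw [rlInt, hcong α]
  rw [hfun, hfg]
  exact hkey
end

section
/- Let a < b be real numbers and let f : [a,b] → ℝ be continuously differentiable. Then for every t ∈ (a,b), the Caputo fractional derivative of f of order α converges to f'(t) as α increases to 1: lim_{α→1⁻} (1/Γ(1-α)) ∫_a^t (t-τ)^{-α} f'(τ) dτ = f'(t). -/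
open MeasureTheory Filter Topology Set

/-- For `f` continuously differentiable on `[a,b]` (with derivative `f'`),
for every `t ∈ (a,b)` the Caputo derivative of order `α` converges to `f'(t)` as
`α → 1⁻`: `(1/Γ(1-α)) ∫_a^t (t-τ)^{-α} f'(τ) dτ → f'(t)`. -/
theorem caputo_tendsto_deriv (a b : ℝ) (hab : a < b) (f f' : ℝ → ℝ)
    (hderiv : ∀ t ∈ Set.Icc a b, HasDerivWithinAt f (f' t) (Set.Icc a b) t)
    (hcont : ContinuousOn f' (Set.Icc a b)) :
    ∀ t ∈ Set.Ioo a b,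
      Filter.Tendsto
        (fun α : ℝ => (1 / Real.Gamma (1 - α)) * ∫ τ in a..t, (t - τ) ^ (-α) * f' τ)
        (nhdsWithin 1 (Set.Ioo (0:ℝ) 1)) (nhds (f' t)) := by
  intro t ht
  obtain ⟨hat, htb⟩ := ht
  -- basic continuity facts
  have hcrp : ∀ x : ℝ, 0 < x → Continuous (fun y : ℝ => x ^ y) := by
    intro x hx
    have : (fun y : ℝ => x ^ y) = fun y => Real.exp (Real.log x * y) :=
      funext fun y => Real.rpow_def_of_pos hx y
    rw [this]; exact Real.continuous_exp.comp (continuous_const.mul continuous_id)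
  have hΓcont : ContinuousAt Real.Gamma 1 := by
    refine (Real.differentiableAt_Gamma ?_).continuousAt
    intro m
    exact (lt_of_le_of_lt (neg_nonpos.mpr m.cast_nonneg) one_pos).ne'
  have hΓ2 : ContinuousAt (fun α : ℝ => Real.Gamma (2 - α)) 1 := by
    have h2 : ContinuousAt (fun α : ℝ => 2 - α) 1 :=
      (continuous_const.sub continuous_id).continuousAt
    have h3 : ContinuousAt Real.Gamma ((fun α : ℝ => 2 - α) 1) := by
      rw [show ((fun α : ℝ => 2 - α) 1) = 1 by norm_num]
      exact hΓcont
    exact h3.comp h2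
  have hΓ2v : Real.Gamma (2 - 1) = 1 := by norm_num [Real.Gamma_one]
  -- integrability of the kernel
  have hker : ∀ (α : ℝ), α < 1 → ∀ c d : ℝ,
      IntervalIntegrable (fun τ => (t - τ) ^ (-α)) volume c d := by
    intro α hα c d
    have h1 : IntervalIntegrable (fun x : ℝ => x ^ (-α)) volume (t - c) (t - d) :=
      intervalIntegral.intervalIntegrable_rpow' (by linarith)
    simpa using h1.comp_sub_left t
  -- value of the kernel integral
  have hJ : ∀ (α : ℝ), α < 1 → ∀ c : ℝ,
      (∫ τ in c..t, (t - τ) ^ (-α)) = (t - c) ^ (1 - α) / (1 - α) := by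
    intro α hα c
    rw [intervalIntegral.integral_comp_sub_left (fun x : ℝ => x ^ (-α)) t, sub_self,
      integral_rpow (Or.inl (by linarith)),
      Real.zero_rpow (by intro h; linarith : -α + 1 ≠ 0)]
    rw [show -α + 1 = 1 - α by ring, sub_zero]
  have hsub : ∀ c d : ℝ, c ∈ Set.Icc a t → d ∈ Set.Icc a t → Set.uIcc c d ⊆ Set.Icc a b := by
    intro c d hc hd
    refine Set.uIcc_subset_Icc ⟨hc.1, le_trans hc.2 htb.le⟩ ⟨hd.1, le_trans hd.2 htb.le⟩
  have hgcont : ∀ c d : ℝ, c ∈ Set.Icc a t → d ∈ Set.Icc a t →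
      ContinuousOn (fun τ => f' τ - f' t) (Set.uIcc c d) := by
    intro c d hc hd
    exact (hcont.mono (hsub c d hc hd)).sub continuousOn_const
  have hamem : a ∈ Set.Icc a t := ⟨le_rfl, hat.le⟩
  have htmem : t ∈ Set.Icc a t := ⟨hat.le, le_rfl⟩
  set K : ℝ → ℝ := fun α => ∫ τ in a..t, (t - τ) ^ (-α) * (f' τ - f' t) with hK
  -- decomposition
  have hdecomp : ∀ α ∈ Set.Ioo (0:ℝ) 1,
      (1 / Real.Gamma (1 - α)) * (∫ τ in a..t, (t - τ) ^ (-α) * f' τ)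
        = ((1 - α) / Real.Gamma (2 - α)) * K α
          + f' t * (t - a) ^ (1 - α) / Real.Gamma (2 - α) := by
    intro α hα
    have h1α : 0 < 1 - α := by linarith [hα.2]
    have hne : (1:ℝ) - α ≠ 0 := h1α.ne'
    have hΓpos : 0 < Real.Gamma (1 - α) := Real.Gamma_pos_of_pos h1α
    have hΓrel : Real.Gamma (2 - α) = (1 - α) * Real.Gamma (1 - α) := by
      rw [show (2:ℝ) - α = (1 - α) + 1 by ring, Real.Gamma_add_one hne]
    have hki := hker α hα.2 a t
    have hkg : IntervalIntegrable (fun τ => (t - τ) ^ (-α) * f' τ) volume a t :=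
      hki.mul_continuousOn (hcont.mono (hsub a t hamem htmem))
    have hkc : IntervalIntegrable (fun τ => (t - τ) ^ (-α) * f' t) volume a t :=
      hki.mul_const _
    have hKval : (∫ τ in a..t, (t - τ) ^ (-α) * f' τ)
        - (∫ τ in a..t, (t - τ) ^ (-α) * f' t) = K α := by
      rw [hK, ← intervalIntegral.integral_sub hkg hkc]
      congr 1; funext τ; ring
    have h2 : (∫ τ in a..t, (t - τ) ^ (-α) * f' t)
        = f' t * ((t - a) ^ (1 - α) / (1 - α)) := by
      rw [intervalIntegral.integral_mul_const, hJ α hα.2 a]; ring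
    have hsplit : (∫ τ in a..t, (t - τ) ^ (-α) * f' τ)
        = K α + f' t * ((t - a) ^ (1 - α) / (1 - α)) := by
      rw [← hKval, h2]; ring
    rw [hsplit, hΓrel]
    field_simp
  -- second term tends to f' t
  have hT2 : Tendsto (fun α : ℝ => f' t * (t - a) ^ (1 - α) / Real.Gamma (2 - α))
      (𝓝[Set.Ioo (0:ℝ) 1] 1) (𝓝 (f' t)) := by
    have hc1 : ContinuousAt (fun α : ℝ => (t - a) ^ (1 - α)) 1 :=
      ((hcrp (t - a) (by linarith)).comp (continuous_const.sub continuous_id)).continuousAt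
    have hc : ContinuousAt
        (fun α : ℝ => f' t * (t - a) ^ (1 - α) / Real.Gamma (2 - α)) 1 :=
      (continuousAt_const.mul hc1).div hΓ2 (by rw [hΓ2v]; norm_num)
    have hval : f' t * (t - a) ^ (1 - (1:ℝ)) / Real.Gamma (2 - 1) = f' t := by
      rw [hΓ2v]; norm_num
    exact (hval ▸ hc.tendsto).mono_left nhdsWithin_le_nhds
  -- first term tends to 0
  have hT1 : Tendsto (fun α : ℝ => ((1 - α) / Real.Gamma (2 - α)) * K α)
      (𝓝[Set.Ioo (0:ℝ) 1] 1) (𝓝 0) := by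
    rw [NormedAddCommGroup.tendsto_nhds_zero]
    intro ε hε
    -- bound on f'
    obtain ⟨M, hM⟩ := isCompact_Icc.exists_bound_of_continuousOn hcont
    have hM0 : 0 ≤ M := le_trans (norm_nonneg (f' t)) (hM t ⟨hat.le, htb.le⟩)
    -- modulus of continuity at t
    have hct : ContinuousWithinAt f' (Set.Icc a b) t :=
      hcont.continuousWithinAt ⟨hat.le, htb.le⟩
    rw [Metric.continuousWithinAt_iff] at hct
    obtain ⟨δ, hδpos, hδ⟩ := hct (ε / 4) (by linarith)
    set δ₀ : ℝ := min (δ / 2) ((t - a) / 2) with hδ₀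
    have hδ₀pos : 0 < δ₀ := lt_min (by linarith) (by linarith)
    have hδ₀lt : δ₀ < t - a := lt_of_le_of_lt (min_le_right _ _) (by linarith)
    have hδ₀δ : δ₀ < δ := lt_of_le_of_lt (min_le_left _ _) (by linarith)
    set s : ℝ := t - δ₀ with hs
    have has : a < s := by simp only [hs]; linarith
    have hst : s < t := by simp only [hs]; linarith
    have hsmem : s ∈ Set.Icc a t := ⟨has.le, hst.le⟩
    -- the bounding function
    set B : ℝ → ℝ := fun α => ((1 - α) / Real.Gamma (2 - α)) * (2 * M * δ₀ ^ (-α) * (t - a))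
        + (ε / 4) * δ₀ ^ (1 - α) / Real.Gamma (2 - α) with hB
    have hbd : ∀ α ∈ Set.Ioo (0:ℝ) 1,
        ‖((1 - α) / Real.Gamma (2 - α)) * K α‖ ≤ B α := by
      intro α hα
      have h1α : 0 < 1 - α := by linarith [hα.2]
      have hΓpos : 0 < Real.Gamma (2 - α) := Real.Gamma_pos_of_pos (by linarith [hα.2])
      have hcnn : 0 ≤ (1 - α) / Real.Gamma (2 - α) := div_nonneg h1α.le hΓpos.le
      -- split K
      have hi1 : IntervalIntegrable (fun τ => (t - τ) ^ (-α) * (f' τ - f' t)) volume a s :=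
        (hker α hα.2 a s).mul_continuousOn (hgcont a s hamem hsmem)
      have hi2 : IntervalIntegrable (fun τ => (t - τ) ^ (-α) * (f' τ - f' t)) volume s t :=
        (hker α hα.2 s t).mul_continuousOn (hgcont s t hsmem htmem)
      have hKsplit : K α = (∫ τ in a..s, (t - τ) ^ (-α) * (f' τ - f' t))
          + ∫ τ in s..t, (t - τ) ^ (-α) * (f' τ - f' t) :=
        (intervalIntegral.integral_add_adjacent_intervals hi1 hi2).symm
      -- first piece
      have hK1 : ‖∫ τ in a..s, (t - τ) ^ (-α) * (f' τ - f' t)‖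
          ≤ 2 * M * δ₀ ^ (-α) * (t - a) := by
        have hb1 : ∀ x ∈ Set.uIoc a s, ‖(t - x) ^ (-α) * (f' x - f' t)‖
            ≤ δ₀ ^ (-α) * (2 * M) := by
          intro x hx
          rw [Set.uIoc_of_le has.le] at hx
          have hx1 : a < x := hx.1
          have hx2 : x ≤ s := hx.2
          have htx : δ₀ ≤ t - x := by simp only [hs] at hx2; linarith
          have hr : (t - x) ^ (-α) ≤ δ₀ ^ (-α) :=
            Real.rpow_le_rpow_of_nonpos hδ₀pos htx (by linarith [hα.1])
          have hrnn : 0 ≤ (t - x) ^ (-α) := Real.rpow_nonneg (by linarith) _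
          have hxab : x ∈ Set.Icc a b := ⟨hx1.le, by linarith [hx2, hst, htb]⟩
          have hg : ‖f' x - f' t‖ ≤ 2 * M := by
            calc ‖f' x - f' t‖ ≤ ‖f' x‖ + ‖f' t‖ := norm_sub_le _ _
            _ ≤ M + M := add_le_add (hM x hxab) (hM t ⟨hat.le, htb.le⟩)
            _ = 2 * M := by ring
          rw [norm_mul]
          have : ‖(t - x) ^ (-α)‖ = (t - x) ^ (-α) := abs_of_nonneg hrnn
          rw [Real.norm_eq_abs, abs_of_nonneg hrnn]
          exact mul_le_mul hr hg (norm_nonneg _) (Real.rpow_nonneg hδ₀pos.le _)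
        calc ‖∫ τ in a..s, (t - τ) ^ (-α) * (f' τ - f' t)‖
            ≤ δ₀ ^ (-α) * (2 * M) * |s - a| :=
              intervalIntegral.norm_integral_le_of_norm_le_const hb1
          _ ≤ 2 * M * δ₀ ^ (-α) * (t - a) := by
              have h2 : 0 ≤ δ₀ ^ (-α) * (2 * M) :=
                mul_nonneg (Real.rpow_nonneg hδ₀pos.le _) (by linarith)
              rw [abs_of_nonneg (by linarith : (0:ℝ) ≤ s - a)]
              calc δ₀ ^ (-α) * (2 * M) * (s - a) ≤ δ₀ ^ (-α) * (2 * M) * (t - a) :=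
                    mul_le_mul_of_nonneg_left (by linarith) h2
                _ = 2 * M * δ₀ ^ (-α) * (t - a) := by ring
      -- second piece
      have hK2 : ‖∫ τ in s..t, (t - τ) ^ (-α) * (f' τ - f' t)‖
          ≤ (ε / 4) * (δ₀ ^ (1 - α) / (1 - α)) := by
        have hbint : IntervalIntegrable (fun τ => (t - τ) ^ (-α) * (ε / 4)) volume s t :=
          (hker α hα.2 s t).mul_const _
        have hb2 : ∀ x ∈ Set.uIoc s t, ‖(t - x) ^ (-α) * (f' x - f' t)‖
            ≤ (t - x) ^ (-α) * (ε / 4) := by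
          intro x hx
          rw [Set.uIoc_of_le hst.le] at hx
          have hx1 : s < x := hx.1
          have hx2 : x ≤ t := hx.2
          have hrnn : 0 ≤ (t - x) ^ (-α) := Real.rpow_nonneg (by linarith) _
          have hxab : x ∈ Set.Icc a b := ⟨by linarith [has], by linarith [htb]⟩
          have hdist : dist x t < δ := by
            rw [Real.dist_eq, abs_of_nonpos (by linarith : x - t ≤ 0)]
            simp only [hs] at hx1
            linarith
          have hg : ‖f' x - f' t‖ ≤ ε / 4 := by
            have := hδ hxab hdist
            rw [Real.dist_eq] at this
            exact le_of_lt this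
          rw [norm_mul, Real.norm_eq_abs, abs_of_nonneg hrnn]
          exact mul_le_mul_of_nonneg_left hg hrnn
        calc ‖∫ τ in s..t, (t - τ) ^ (-α) * (f' τ - f' t)‖
            ≤ |∫ τ in s..t, (t - τ) ^ (-α) * (ε / 4)| :=
              intervalIntegral.norm_integral_le_abs_of_norm_le
                ((ae_restrict_iff' measurableSet_uIoc).mpr (ae_of_all _ hb2)) hbint
          _ = (ε / 4) * (δ₀ ^ (1 - α) / (1 - α)) := by
              rw [intervalIntegral.integral_mul_const, hJ α hα.2 s]
              have hts : t - s = δ₀ := by simp [hs]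
              rw [hts, abs_of_nonneg]
              · ring
              · positivity
      -- combine
      have hKbd : ‖K α‖ ≤ 2 * M * δ₀ ^ (-α) * (t - a)
          + (ε / 4) * (δ₀ ^ (1 - α) / (1 - α)) := by
        rw [hKsplit]
        exact le_trans (norm_add_le _ _) (add_le_add hK1 hK2)
      calc ‖((1 - α) / Real.Gamma (2 - α)) * K α‖
          = ((1 - α) / Real.Gamma (2 - α)) * ‖K α‖ := by
            rw [norm_mul, Real.norm_eq_abs, abs_of_nonneg hcnn]
        _ ≤ ((1 - α) / Real.Gamma (2 - α)) *
            (2 * M * δ₀ ^ (-α) * (t - a) + (ε / 4) * (δ₀ ^ (1 - α) / (1 - α))) :=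
            mul_le_mul_of_nonneg_left hKbd hcnn
        _ = B α := by
            rw [hB]
            field_simp
    -- B tends to ε/4
    have hBt : Tendsto B (𝓝[Set.Ioo (0:ℝ) 1] 1) (𝓝 (ε / 4)) := by
      have hc1 : ContinuousAt (fun α : ℝ => δ₀ ^ (-α)) 1 :=
        ((hcrp δ₀ hδ₀pos).comp continuous_neg).continuousAt
      have hc2 : ContinuousAt (fun α : ℝ => δ₀ ^ (1 - α)) 1 :=
        ((hcrp δ₀ hδ₀pos).comp (continuous_const.sub continuous_id)).continuousAt
      have hcB : ContinuousAt B 1 := by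
        rw [hB]
        exact (((continuous_const.sub continuous_id).continuousAt.div hΓ2
          (by rw [hΓ2v]; norm_num)).mul ((continuousAt_const.mul hc1).mul continuousAt_const)).add
          (((continuousAt_const.mul hc2)).div hΓ2 (by rw [hΓ2v]; norm_num))
      have hval : B 1 = ε / 4 := by
        simp only [hB, sub_self, zero_div, zero_mul, zero_add, Real.rpow_zero, hΓ2v]
        ring
      exact (hval ▸ hcB.tendsto).mono_left nhdsWithin_le_nhds
    have hBlt : ∀ᶠ α in 𝓝[Set.Ioo (0:ℝ) 1] 1, B α < ε :=
      hBt.eventually_lt_const (by linarith)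
    filter_upwards [eventually_mem_nhdsWithin, hBlt] with α hα hBα
    exact lt_of_le_of_lt (hbd α hα) hBα
  -- combine
  have hsum : Tendsto (fun α : ℝ => ((1 - α) / Real.Gamma (2 - α)) * K α
      + f' t * (t - a) ^ (1 - α) / Real.Gamma (2 - α))
      (𝓝[Set.Ioo (0:ℝ) 1] 1) (𝓝 (f' t)) := by
    have := hT1.add hT2
    simpa using this
  refine hsum.congr' ?_
  filter_upwards [eventually_mem_nhdsWithin] with α hα
  exact (hdecomp α hα).symm
end

section
/- Let ρ > -1 and β ∈ ℝ. Then the Wright function x ↦ W(x, ρ, β) = ∑_{k=0}^∞ x^k/(k! Γ(ρk+β)) is differentiable on ℝ and its derivative satisfies (d/dx) W(x, ρ, β) = W(x, ρ, ρ+β) for every x ∈ ℝ. -/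
open MeasureTheory Filter Topology Set

section WrightAux


lemma myGamma_add_le {x a : ℝ} (hx : 0 < x) (h0 : 0 ≤ a) (h1 : a ≤ 1) :
    Real.Gamma (x + a) ≤ Real.Gamma x * x ^ a := by
  have hx1 : (0:ℝ) < x + 1 := by linarith
  have h := Real.convexOn_log_Gamma.2 (mem_Ioi.2 hx) (mem_Ioi.2 hx1)
    (by linarith : (0:ℝ) ≤ 1 - a) h0 (by ring)
  simp only [smul_eq_mul, Function.comp_apply] at h
  have harg : (1 - a) * x + a * (x + 1) = x + a := by ring
  rw [harg] at h
  have hΓx : 0 < Real.Gamma x := Real.Gamma_pos_of_pos hx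
  have hΓ1 : Real.Gamma (x + 1) = x * Real.Gamma x := Real.Gamma_add_one hx.ne'
  rw [hΓ1, Real.log_mul hx.ne' hΓx.ne'] at h
  have h2 : Real.log (Real.Gamma (x + a)) ≤ Real.log (Real.Gamma x) + a * Real.log x := by
    nlinarith
  have h3 : Real.log (Real.Gamma x) + a * Real.log x
      = Real.log (Real.Gamma x * x ^ a) := by
    rw [Real.log_mul hΓx.ne' (Real.rpow_pos_of_pos hx a).ne', Real.log_rpow hx]
  rw [h3] at h2
  have := Real.exp_le_exp.2 h2
  rwa [Real.exp_log (Real.Gamma_pos_of_pos (by linarith)),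
    Real.exp_log (by positivity)] at this

lemma mySum_dom {a c R : ℝ} (ha : 0 ≤ a) (ha1 : a < 1) (hc : 2 ≤ c) (hR : 0 < R) :
    Summable (fun k : ℕ => R ^ k * Real.Gamma (a * k + c) / k.factorial) := by
  set t : ℕ → ℝ := fun k => R ^ k * Real.Gamma (a * k + c) / k.factorial with ht
  have hpos : ∀ k, 0 < t k := by
    intro k
    have : (0:ℝ) < a * k + c := by positivity
    have := Real.Gamma_pos_of_pos this
    positivity
  have htend : Tendsto (fun k : ℕ => R * (a + c) ^ a * ((k : ℝ) + 1) ^ (a - 1))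
      atTop (𝓝 0) := by
    have h1 : Tendsto (fun k : ℕ => ((k : ℝ) + 1) ^ (a - 1)) atTop (𝓝 0) := by
      have := tendsto_rpow_neg_atTop (by linarith : (0:ℝ) < 1 - a)
      have h2 : Tendsto (fun k : ℕ => (k : ℝ) + 1) atTop atTop :=
        tendsto_atTop_add_const_right _ 1 tendsto_natCast_atTop_atTop
      have := this.comp h2
      simpa [neg_sub, Function.comp_def] using this
    simpa using h1.const_mul (R * (a + c) ^ a)
  have hev : ∀ᶠ k in atTop, ‖t (k + 1)‖ ≤ (1/2 : ℝ) * ‖t k‖ := by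
    filter_upwards [htend.eventually_lt_const (by norm_num : (0:ℝ) < 1/2)] with k hk
    have hx : (0:ℝ) < a * k + c := by positivity
    have key : Real.Gamma (a * (k + 1 : ℕ) + c)
        ≤ Real.Gamma (a * k + c) * (a + c) ^ a * ((k:ℝ) + 1) ^ a := by
      have e1 : a * ((k + 1 : ℕ) : ℝ) + c = (a * k + c) + a := by push_cast; ring
      rw [e1]
      calc Real.Gamma ((a * k + c) + a) ≤ Real.Gamma (a * k + c) * (a * k + c) ^ a :=
            myGamma_add_le hx ha ha1.le
        _ ≤ Real.Gamma (a * k + c) * ((a + c) * ((k:ℝ) + 1)) ^ a := by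
            gcongr
            · nlinarith [ha, hc, Nat.cast_nonneg (α := ℝ) k]
        _ = Real.Gamma (a * k + c) * (a + c) ^ a * ((k:ℝ) + 1) ^ a := by
            rw [Real.mul_rpow (by linarith) (by positivity)]; ring
    have hfact : ((k + 1).factorial : ℝ) = ((k:ℝ) + 1) * k.factorial := by
      push_cast [Nat.factorial_succ]; ring
    have hk1 : (0:ℝ) < (k:ℝ) + 1 := by positivity
    have hbound : t (k + 1) ≤ t k * (R * (a + c) ^ a * ((k:ℝ) + 1) ^ (a - 1)) := by
      rw [ht]
      simp only
      rw [hfact, pow_succ]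
      rw [div_le_iff₀ (by positivity)]
      have hΓ := (Real.Gamma_pos_of_pos hx).le
      have hrw : ((k:ℝ)+1) ^ (a - 1) = ((k:ℝ)+1) ^ a / ((k:ℝ)+1) := by
        rw [Real.rpow_sub hk1, Real.rpow_one]
      rw [hrw]
      have hkf : (0:ℝ) < (k.factorial : ℝ) := by positivity
      calc R ^ k * R * Real.Gamma (a * ↑(k+1) + c)
          ≤ R ^ k * R * (Real.Gamma (a * k + c) * (a + c) ^ a * ((k:ℝ) + 1) ^ a) := by
            gcongr
        _ = R ^ k * Real.Gamma (a * ↑k + c) / ↑k.factorial *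
            (R * (a + c) ^ a * (((k:ℝ) + 1) ^ a / ((k:ℝ) + 1))) * (((k:ℝ) + 1) * ↑k.factorial) := by
            field_simp
    calc ‖t (k + 1)‖ = t (k + 1) := by
          rw [Real.norm_eq_abs, abs_of_pos (hpos _)]
      _ ≤ t k * (R * (a + c) ^ a * ((k:ℝ) + 1) ^ (a - 1)) := hbound
      _ ≤ t k * (1/2) := by
          have := (hpos k).le
          nlinarith [hk, (hpos k).le, mul_le_mul_of_nonneg_left hk.le (hpos k).le]
      _ = (1/2) * ‖t k‖ := by rw [Real.norm_eq_abs, abs_of_pos (hpos _)]; ring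
  exact summable_of_ratio_norm_eventually_le (by norm_num) hev

lemma mySummable_of_eventually_le {f g : ℕ → ℝ} (hf : ∀ k, 0 ≤ f k)
    (h : ∀ᶠ k in atTop, f k ≤ g k) (hg : Summable g) : Summable f := by
  obtain ⟨N, hN⟩ := eventually_atTop.1 h
  rw [← summable_nat_add_iff N]
  exact Summable.of_nonneg_of_le (fun k => hf _) (fun k => hN _ (Nat.le_add_left N k))
    ((summable_nat_add_iff N).2 hg)

lemma myS {ρ : ℝ} (hρ : -1 < ρ) (β' : ℝ) {R : ℝ} (hR : 0 < R) :
    Summable (fun k : ℕ => R ^ k / (k.factorial * |Real.Gamma (ρ * k + β')|)) := by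
  set f : ℕ → ℝ := fun k => R ^ k / (k.factorial * |Real.Gamma (ρ * k + β')|) with hf
  have hfnn : ∀ k, 0 ≤ f k := fun k => by positivity
  rcases lt_trichotomy ρ 0 with h | h | h
  · -- case ρ < 0
    set a : ℝ := -ρ with hadef
    have ha0 : 0 < a := by linarith
    have ha1 : a < 1 := by linarith
    set c : ℝ := |β'| + 3 with hcdef
    have hc2 : (2:ℝ) ≤ c := by have := abs_nonneg β'; linarith
    have hsum : Summable (fun k : ℕ => R ^ k * Real.Gamma (a * k + c) / k.factorial * (1/Real.pi)) :=
      (mySum_dom ha0.le ha1 hc2 hR).mul_right _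
    apply mySummable_of_eventually_le hfnn ?_ hsum
    have hev : ∀ᶠ k : ℕ in atTop, 1 + β' ≤ a * k := by
      have : Tendsto (fun k : ℕ => a * (k:ℝ)) atTop atTop :=
        (tendsto_natCast_atTop_atTop (R := ℝ)).const_mul_atTop ha0
      exact this.eventually_ge_atTop _
    filter_upwards [hev] with k hk
    set z : ℝ := ρ * k + β' with hz
    have hz1 : 1 - z = a * k + (1 - β') := by rw [hz, hadef]; ring
    have h1z : (2:ℝ) ≤ 1 - z := by rw [hz1]; linarith
    have hΓ1z : 0 < Real.Gamma (1 - z) := Real.Gamma_pos_of_pos (by linarith)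
    have hπ : (0:ℝ) < Real.pi := Real.pi_pos
    by_cases hΓ : Real.Gamma z = 0
    · rw [hf]; simp only [← hz, hΓ, abs_zero, mul_zero, div_zero]
      positivity
    · have hrefl := Real.Gamma_mul_Gamma_one_sub z
      have hsin : Real.sin (Real.pi * z) ≠ 0 := by
        intro h0
        rw [h0, div_zero] at hrefl
        exact hΓ (by nlinarith [hΓ1z])
      have habs : |Real.Gamma z| * Real.Gamma (1 - z) = Real.pi / |Real.sin (Real.pi * z)| := by
        rw [← abs_of_pos hΓ1z, ← abs_mul, hrefl, abs_div, abs_of_pos hπ]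
      have hsin1 : |Real.sin (Real.pi * z)| ≤ 1 := abs_le.2 ⟨Real.neg_one_le_sin _, Real.sin_le_one _⟩
      have hsinpos : 0 < |Real.sin (Real.pi * z)| := abs_pos.2 hsin
      have hlow : Real.pi / Real.Gamma (1 - z) ≤ |Real.Gamma z| := by
        rw [div_le_iff₀ hΓ1z, habs, le_div_iff₀ hsinpos]
        nlinarith
      have h1c : (1:ℝ) - β' ≤ c := by
        rw [hcdef]; have := neg_abs_le β'; linarith
      have hak : (0:ℝ) ≤ a * k := by positivity
      have hΓmono : Real.Gamma (1 - z) ≤ Real.Gamma (a * k + c) := by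
        apply Real.Gamma_strictMonoOn_Ici.monotoneOn (mem_Ici.2 ?_) (mem_Ici.2 ?_) ?_
        · rw [hz1]; linarith
        · linarith
        · rw [hz1]; linarith
      have hΓzpos : 0 < |Real.Gamma z| := abs_pos.2 hΓ
      have hkf : (0:ℝ) < (k.factorial : ℝ) := by positivity
      rw [hf]
      simp only [← hz]
      calc R ^ k / (↑k.factorial * |Real.Gamma z|)
          ≤ R ^ k / (↑k.factorial * (Real.pi / Real.Gamma (1 - z))) := by
            apply div_le_div_of_nonneg_left (by positivity) (by positivity)
            exact mul_le_mul_of_nonneg_left hlow hkf.le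
        _ = R ^ k * Real.Gamma (1 - z) / ↑k.factorial * (1 / Real.pi) := by
            field_simp
        _ ≤ R ^ k * Real.Gamma (a * k + c) / ↑k.factorial * (1 / Real.pi) := by
            gcongr
  · -- case ρ = 0
    subst h
    have : f = fun k => (R ^ k / k.factorial) * (1 / |Real.Gamma β'|) := by
      funext k; rw [hf]; simp only [zero_mul, zero_add]
      rw [div_mul_eq_div_div, div_eq_mul_one_div]
    rw [this]
    exact (Real.summable_pow_div_factorial R).mul_right _
  · -- case ρ > 0
    apply mySummable_of_eventually_le hfnn ?_ (Real.summable_pow_div_factorial R)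
    have hev : ∀ᶠ k : ℕ in atTop, (2 : ℝ) ≤ ρ * k + β' := by
      have : Tendsto (fun k : ℕ => ρ * k + β') atTop atTop := by
        apply tendsto_atTop_add_const_right
        exact (tendsto_natCast_atTop_atTop (R := ℝ)).const_mul_atTop h
      exact this.eventually_ge_atTop 2
    filter_upwards [hev] with k hk
    have h1 : (1:ℝ) ≤ Real.Gamma (ρ * k + β') := by
      have := Real.Gamma_strictMonoOn_Ici.monotoneOn (by norm_num : (2:ℝ) ∈ Ici 2)
        (mem_Ici.2 hk) hk
      rwa [Real.Gamma_two] at this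
    rw [hf]
    apply div_le_div_of_nonneg_left (by positivity) (by positivity)
    rw [abs_of_nonneg (by linarith)]
    nlinarith [Nat.one_le_iff_ne_zero.2 (Nat.factorial_ne_zero k),
      (Nat.cast_pos (α := ℝ)).2 k.factorial_pos]

end WrightAux

/-- For `ρ > -1` and `β ∈ ℝ`, the Wright function `x ↦ W(x,ρ,β)` is
differentiable on `ℝ` with derivative `(d/dx) W(x,ρ,β) = W(x,ρ,ρ+β)`. -/
theorem wright_hasDerivAt (ρ β : ℝ) (hρ : -1 < ρ) :
    ∀ x : ℝ, HasDerivAt (fun y => wright y ρ β) (wright x ρ (ρ + β)) x := by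
  intro x
  set R : ℝ := |x| + 1 with hRdef
  have hR : 0 < R := by positivity
  set g : ℕ → ℝ → ℝ := fun k y => y ^ k / ((Nat.factorial k : ℝ) * Real.Gamma (ρ * k + β))
    with hg
  set g' : ℕ → ℝ → ℝ :=
    fun k y => ((k : ℝ) * y ^ (k - 1)) / ((Nat.factorial k : ℝ) * Real.Gamma (ρ * k + β))
    with hg'
  set u : ℕ → ℝ :=
    fun k => ((k : ℝ) * R ^ (k - 1)) / ((Nat.factorial k : ℝ) * |Real.Gamma (ρ * k + β)|)
    with hu
  have hshift : ∀ k : ℕ, u (k + 1) = R ^ k / (k.factorial * |Real.Gamma (ρ * k + (ρ + β))|) := by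
    intro k
    rw [hu]
    simp only [Nat.add_sub_cancel, Nat.factorial_succ, Nat.cast_mul, Nat.cast_add, Nat.cast_one]
    have harg : ρ * ((k : ℝ) + 1) + β = ρ * k + (ρ + β) := by ring
    rw [harg, mul_assoc, mul_div_mul_left _ _ (by positivity : ((k:ℝ) + 1) ≠ 0)]
  have husum : Summable u := by
    rw [← summable_nat_add_iff 1]
    simpa only [hshift] using myS hρ (ρ + β) hR
  have hderiv : ∀ k : ℕ, ∀ y : ℝ, y ∈ Metric.ball (0:ℝ) R → HasDerivAt (g k) (g' k y) y := by
    intro k y _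
    exact (hasDerivAt_pow k y).div_const _
  have hbound : ∀ k : ℕ, ∀ y : ℝ, y ∈ Metric.ball (0:ℝ) R → ‖g' k y‖ ≤ u k := by
    intro k y hy
    rw [Metric.mem_ball, Real.dist_eq, sub_zero] at hy
    rw [hg', hu]
    simp only [Real.norm_eq_abs, abs_div, abs_mul, abs_pow, Nat.abs_cast]
    gcongr
  have h0mem : (0:ℝ) ∈ Metric.ball (0:ℝ) R := Metric.mem_ball_self hR
  have hxmem : x ∈ Metric.ball (0:ℝ) R := by
    rw [Metric.mem_ball, Real.dist_eq, sub_zero]; linarith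
  have hg0 : Summable (fun k => g k 0) := by
    apply summable_of_ne_finset_zero (s := {0})
    intro k hk
    simp only [Finset.mem_singleton] at hk
    rw [hg]
    simp [zero_pow hk]
  have H := hasDerivAt_tsum_of_isPreconnected husum Metric.isOpen_ball
    (convex_ball (0:ℝ) R).isPreconnected hderiv hbound h0mem hg0 hxmem
  have hfun : (fun y => wright y ρ β) = fun z => ∑' k, g k z := rfl
  have hgsum : Summable (fun k => g' k x) :=
    Summable.of_norm_bounded husum (fun k => hbound k x hxmem)
  have hval : wright x ρ (ρ + β) = ∑' k, g' k x := by
    rw [Summable.tsum_eq_zero_add hgsum]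
    have h0 : g' 0 x = 0 := by rw [hg']; simp
    rw [h0, zero_add, wright]
    apply tsum_congr
    intro k
    rw [hg']
    simp only [Nat.add_sub_cancel, Nat.factorial_succ, Nat.cast_mul, Nat.cast_add, Nat.cast_one]
    have harg : ρ * ((k : ℝ) + 1) + β = ρ * k + (ρ + β) := by ring
    rw [harg, mul_assoc, mul_div_mul_left _ _ (by positivity : ((k:ℝ) + 1) ≠ 0)]
  rw [hfun, hval]
  exact H
end

section
/- For every x ≥ 0, lim_{α→1⁻} W(-2x, -α/2, 1-α/2) = e^{-x²}/√π, and this convergence is uniform on compact subsets of [0,∞); that is, the Mainardi function M_{α/2}(2x) = W(-2x, -α/2, 1-α/2) converges, uniformly on compact sets, to e^{-x²}/√π as α increases to 1. -/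
open MeasureTheory Filter Topology Set

open scoped Nat

noncomputable def mcoef (k : ℕ) (α : ℝ) : ℝ :=
  (-2 : ℝ) ^ k / ((k ! : ℝ) * Real.Gamma (1 - α * (k + 1) / 2))

lemma continuous_rGammaInv : Continuous fun x : ℝ => (Real.Gamma x)⁻¹ := by
  have h : ∀ x : ℝ, (Real.Gamma x)⁻¹ = ((Complex.Gamma (x:ℂ))⁻¹).re := by
    intro x
    rw [Complex.Gamma_ofReal, ← Complex.ofReal_inv, Complex.ofReal_re]
  simp only [h]
  exact Complex.continuous_re.comp
    (Complex.differentiable_one_div_Gamma.continuous.comp Complex.continuous_ofReal)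

lemma mcoef_continuous (k : ℕ) : Continuous fun α : ℝ => mcoef k α := by
  unfold mcoef
  simp only [div_eq_mul_inv, mul_inv]
  exact continuous_const.mul (continuous_const.mul
    (continuous_rGammaInv.comp (by continuity)))

lemma gamma_half_sub (m : ℕ) :
    Real.Gamma (1/2 - m) = (-4:ℝ)^m * (m ! : ℝ) * Real.sqrt Real.pi / ((2*m)! : ℝ) := by
  induction m with
  | zero =>
      norm_num
      exact Real.Gamma_one_half_eq
  | succ n ih =>
    have h0 : (1/2 : ℝ) - ((n:ℝ)+1) ≠ 0 := by
      intro h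
      have : (0:ℝ) ≤ (n:ℝ) := Nat.cast_nonneg n
      linarith
    have key := Real.Gamma_add_one h0
    have harg : (1/2:ℝ) - ((n:ℝ)+1) + 1 = 1/2 - n := by ring
    rw [harg, ih] at key
    have hX : Real.Gamma (1/2 - ((n:ℝ)+1)) =
        ((-4:ℝ)^n * (n ! : ℝ) * Real.sqrt Real.pi / ((2*n)! : ℝ)) / (1/2 - ((n:ℝ)+1)) := by
      rw [eq_div_iff h0]; linear_combination -key
    have hf1 : (((2*(n+1))! : ℕ) : ℝ) = (2*(n:ℝ)+2) * ((2*(n:ℝ)+1) * ((2*n)! : ℝ)) := by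
      have h2 : 2*(n+1) = (2*n+1)+1 := by ring
      rw [h2, Nat.factorial_succ, Nat.factorial_succ]
      push_cast; ring
    have hf2 : (((n+1)! : ℕ) : ℝ) = ((n:ℝ)+1) * (n ! : ℝ) := by
      rw [Nat.factorial_succ]; push_cast; ring
    have hcast : (1/2 : ℝ) - ((n+1 : ℕ) : ℝ) = 1/2 - ((n:ℝ)+1) := by push_cast; ring
    have hne : ((2*n)! : ℝ) ≠ 0 := Nat.cast_ne_zero.mpr (Nat.factorial_ne_zero _)
    have hne2 : (((2*(n+1))! : ℕ) : ℝ) ≠ 0 := Nat.cast_ne_zero.mpr (Nat.factorial_ne_zero _)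
    rw [hcast, hX, div_div, div_eq_div_iff (mul_ne_zero hne h0) hne2, hf1, hf2]
    ring

lemma sqrtpi_ne : Real.sqrt Real.pi ≠ 0 := (Real.sqrt_pos.mpr Real.pi_pos).ne'

lemma mcoef_one_even (m : ℕ) :
    mcoef (2*m) 1 = (-1:ℝ)^m / ((m ! : ℝ) * Real.sqrt Real.pi) := by
  unfold mcoef
  have harg : 1 - (1:ℝ) * (((2*m : ℕ):ℝ) + 1) / 2 = 1/2 - m := by push_cast; ring
  rw [harg, gamma_half_sub]
  have h1 : ((2*m)! : ℝ) ≠ 0 := Nat.cast_ne_zero.mpr (Nat.factorial_ne_zero _)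
  have h2 : ((2*m)! : ℝ) * ((-4:ℝ)^m * (m ! : ℝ) * Real.sqrt Real.pi / ((2*m)! : ℝ))
      = (-4:ℝ)^m * (m ! : ℝ) * Real.sqrt Real.pi := by field_simp
  rw [h2]
  have h3 : (-2:ℝ)^(2*m) = 4^m := by rw [pow_mul]; norm_num
  have h4 : (-4:ℝ)^m = (-1:ℝ)^m * 4^m := by rw [neg_pow]
  rw [h3, h4]
  have hm : ((m !:ℕ) : ℝ) ≠ 0 := Nat.cast_ne_zero.mpr (Nat.factorial_ne_zero _)
  have h4m : (4:ℝ)^m ≠ 0 := by positivity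
  have hneg : ((-1:ℝ)^m) ≠ 0 := pow_ne_zero m (by norm_num)
  have h5 : ((-1:ℝ)^m) * (-1:ℝ)^m = 1 := by
    rw [← pow_add]; exact Even.neg_one_pow ⟨m, rfl⟩
  rw [div_eq_div_iff
    (by exact mul_ne_zero (mul_ne_zero (mul_ne_zero hneg h4m) hm) sqrtpi_ne)
    (mul_ne_zero hm sqrtpi_ne)]
  linear_combination (-((4:ℝ)^m * (m ! : ℝ) * Real.sqrt Real.pi)) * h5

lemma mcoef_one_odd (m : ℕ) : mcoef (2*m+1) 1 = 0 := by
  unfold mcoef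
  have harg : 1 - (1:ℝ) * (((2*m+1 : ℕ):ℝ) + 1) / 2 = -((m:ℕ):ℝ) := by push_cast; ring
  rw [harg, Real.Gamma_neg_nat_eq_zero, mul_zero, div_zero]

lemma mcoef_even_term (x : ℝ) (m : ℕ) :
    mcoef (2*m) 1 * x^(2*m) = ((-x^2)^m / (m ! : ℝ)) / Real.sqrt Real.pi := by
  rw [mcoef_one_even, pow_mul, neg_pow]
  ring

lemma exp_tsum (y : ℝ) : Real.exp y = ∑' n : ℕ, y^n / (n ! : ℝ) := by
  rw [Real.exp_eq_exp_ℝ, NormedSpace.exp_eq_tsum_div]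

lemma sum_mcoef_one (x : ℝ) :
    (∑' k : ℕ, mcoef k 1 * x^k) = Real.exp (-x^2) / Real.sqrt Real.pi := by
  have hinj : Function.Injective (fun m : ℕ => 2*m) := fun a b h => by have h2 : 2*a = 2*b := h; omega
  have hsupp : Function.support (fun k : ℕ => mcoef k 1 * x^k)
      ⊆ Set.range (fun m : ℕ => 2*m) := by
    intro k hk
    rcases Nat.even_or_odd k with ⟨m, hm⟩ | ⟨m, hm⟩
    · exact ⟨m, show 2*m = k by omega⟩
    · exfalso; apply hk
      show mcoef k 1 * x^k = 0
      rw [hm, mcoef_one_odd, zero_mul]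
  rw [← hinj.tsum_eq hsupp]
  simp only [mcoef_even_term]
  rw [tsum_div_const, exp_tsum (-x^2)]

lemma summable_mone (x : ℝ) : Summable (fun k : ℕ => mcoef k 1 * x^k) := by
  have hinj : Function.Injective (fun m : ℕ => 2*m) := fun a b h => by have h2 : 2*a = 2*b := h; omega
  have hsupp : ∀ k ∉ Set.range (fun m : ℕ => 2*m), mcoef k 1 * x^k = 0 := by
    intro k hk
    rcases Nat.even_or_odd k with ⟨m, hm⟩ | ⟨m, hm⟩
    · exact absurd ⟨m, show 2*m = k by omega⟩ hk
    · rw [hm, mcoef_one_odd, zero_mul]  -- ok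
  refine (Function.Injective.summable_iff hinj hsupp).1 ?_
  have : ((fun k : ℕ => mcoef k 1 * x^k) ∘ (fun m : ℕ => 2*m))
      = fun m : ℕ => ((-x^2)^m / (m ! : ℝ)) / Real.sqrt Real.pi := by
    funext m; exact mcoef_even_term x m
  rw [this]
  exact (Real.summable_pow_div_factorial (-x^2)).div_const _

lemma inv_gamma_le {z T : ℝ} (h2 : 2 ≤ 1 - z) (hT : 1 - z ≤ T) :
    |(Real.Gamma z)⁻¹| ≤ Real.Gamma T / Real.pi := by
  have hT2 : (2:ℝ) ≤ T := le_trans h2 hT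
  have hTpos : 0 < Real.Gamma T := Real.Gamma_pos_of_pos (by linarith)
  have hpi := Real.pi_pos
  by_cases hz : Real.Gamma z = 0
  · rw [hz, inv_zero, abs_zero]
    positivity
  · have hrefl := Real.Gamma_mul_Gamma_one_sub z
    have h1z : 0 < Real.Gamma (1-z) := Real.Gamma_pos_of_pos (by linarith)
    have hsin : Real.sin (Real.pi * z) ≠ 0 := by
      intro h
      rw [h, div_zero] at hrefl
      rcases mul_eq_zero.1 hrefl with h' | h'
      · exact hz h'
      · exact h1z.ne' h'
    have hrefl2 : Real.Gamma z * Real.Gamma (1-z) * Real.sin (Real.pi * z) = Real.pi := by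
      rw [hrefl]; field_simp
    have hinv : (Real.Gamma z)⁻¹ = Real.Gamma (1-z) * Real.sin (Real.pi * z) / Real.pi := by
      rw [eq_div_iff hpi.ne', inv_mul_eq_iff_eq_mul₀ hz]
      linear_combination -hrefl2
    rw [hinv, abs_div, abs_of_pos hpi, abs_mul, abs_of_pos h1z]
    have hmono : Real.Gamma (1-z) ≤ Real.Gamma T :=
      Real.Gamma_strictMonoOn_Ici.monotoneOn (by exact h2) (by exact hT2) hT
    calc Real.Gamma (1-z) * |Real.sin (Real.pi * z)| / Real.pi
        ≤ Real.Gamma (1-z) * 1 / Real.pi := by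
          gcongr
          exact Real.abs_sin_le_one _
      _ = Real.Gamma (1-z) / Real.pi := by ring
      _ ≤ Real.Gamma T / Real.pi := by gcongr

lemma mcoef_bound {k : ℕ} (hk : 7 ≤ k) {α : ℝ} (hα : α ∈ Set.Icc (1/2 : ℝ) 1)
    {R : ℝ} (hR : 1 ≤ R) :
    |mcoef k α| * R^k ≤ (2*R)^k / (Real.pi * (((k - (k/2+1))! : ℕ) : ℝ)) := by
  obtain ⟨hα1, hα2⟩ := hα
  have hk7 : (7:ℝ) ≤ (k:ℝ) := by exact_mod_cast hk
  have hR0 : (0:ℝ) < R := lt_of_lt_of_le one_pos hR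
  set m := k/2 + 1 with hm
  have hmk : m ≤ k := by omega
  have hdiv : (k:ℝ) ≤ 2*((k/2 : ℕ):ℝ) + 1 := by exact_mod_cast (by omega : k ≤ 2*(k/2) + 1)
  have hz : (1:ℝ) - (1 - α * (k+1) / 2) = α * (k+1) / 2 := by ring
  have h2le : (2:ℝ) ≤ α * (k+1) / 2 := by nlinarith
  have hTle : α * (k+1) / 2 ≤ ((m:ℕ):ℝ) + 1 := by
    have hmcast : ((m:ℕ):ℝ) = ((k/2 : ℕ):ℝ) + 1 := by exact_mod_cast rfl
    nlinarith
  have hG := inv_gamma_le (z := 1 - α * (k+1) / 2) (T := ((m:ℕ):ℝ) + 1) (by rw [hz]; exact h2le) (by rw [hz]; exact hTle)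
  rw [Real.Gamma_nat_eq_factorial] at hG
  -- |mcoef k α| = 2^k / k! * |Γ⁻¹|
  have habs : |mcoef k α| = 2^k / ((k ! : ℕ):ℝ) * |(Real.Gamma (1 - α * (k+1) / 2))⁻¹| := by
    unfold mcoef
    rw [div_eq_mul_inv, mul_inv, abs_mul, abs_mul, abs_pow]
    have : |(-2:ℝ)| = 2 := by norm_num
    rw [this]
    have hfp : (0:ℝ) < ((k ! : ℕ):ℝ) := by exact_mod_cast Nat.factorial_pos k
    rw [abs_of_pos (inv_pos.mpr hfp)]
    ring
  have hkf : (0:ℝ) < ((k ! : ℕ):ℝ) := by exact_mod_cast Nat.factorial_pos k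
  have hmf : (0:ℝ) < ((m ! : ℕ):ℝ) := by exact_mod_cast Nat.factorial_pos m
  have hkmf : (0:ℝ) < (((k-m)! : ℕ):ℝ) := by exact_mod_cast Nat.factorial_pos (k-m)
  have hpi := Real.pi_pos
  have hfact : ((m ! : ℕ):ℝ) * (((k-m)! : ℕ):ℝ) ≤ ((k ! : ℕ):ℝ) := by
    have hdvd : m ! * (k-m)! ∣ k ! := by
      have h := Nat.factorial_mul_factorial_dvd_factorial_add m (k-m)
      rwa [show m + (k-m) = k by omega] at h
    exact_mod_cast Nat.le_of_dvd (Nat.factorial_pos k) hdvd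
  calc |mcoef k α| * R^k
      ≤ (2^k / ((k ! : ℕ):ℝ) * (((m ! : ℕ):ℝ) / Real.pi)) * R^k := by
        rw [habs]
        have := mul_le_mul_of_nonneg_left hG (by positivity : (0:ℝ) ≤ 2^k / ((k ! : ℕ):ℝ))
        exact mul_le_mul_of_nonneg_right this (by positivity)
    _ = (2*R)^k * ((m ! : ℕ):ℝ) / (Real.pi * ((k ! : ℕ):ℝ)) := by
        rw [mul_pow]; ring
    _ ≤ (2*R)^k / (Real.pi * (((k-m)! : ℕ):ℝ)) := by
        rw [div_le_div_iff₀ (by positivity) (by positivity)]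
        have hA : (0:ℝ) ≤ (2*R)^k * Real.pi := by positivity
        have := mul_le_mul_of_nonneg_left hfact hA
        linear_combination this

lemma summable_Nb {R : ℝ} (hR0 : 0 < R) :
    Summable (fun k : ℕ => (2*R)^k / (Real.pi * (((k - (k/2+1))! : ℕ) : ℝ))) := by
  apply Summable.even_add_odd
  · apply (summable_nat_add_iff 1).mp
    have heq : ∀ j : ℕ, (2*R)^(2*(j+1)) / (Real.pi * ((((2*(j+1)) - ((2*(j+1))/2+1))! : ℕ) : ℝ))
        = (4*R^2) * ((4*R^2)^j / ((j ! : ℕ):ℝ)) / Real.pi := by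
      intro j
      have hidx : (2*(j+1)) - ((2*(j+1))/2+1) = j := by omega
      rw [hidx]
      have hpow : (2*R)^(2*(j+1)) = (4*R^2)^(j+1) := by
        rw [show (4*R^2) = (2*R)^2 by ring, ← pow_mul]
      rw [hpow, pow_succ]
      ring
    have : Summable (fun j : ℕ => (4*R^2) * ((4*R^2)^j / ((j ! : ℕ):ℝ)) / Real.pi) :=
      (((Real.summable_pow_div_factorial (4*R^2)).mul_left (4*R^2)).div_const Real.pi)
    exact this.congr (fun j => (heq j).symm)
  · have heq : ∀ j : ℕ, (2*R)^(2*j+1) / (Real.pi * ((((2*j+1) - ((2*j+1)/2+1))! : ℕ) : ℝ))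
        = (2*R) * ((4*R^2)^j / ((j ! : ℕ):ℝ)) / Real.pi := by
      intro j
      have hidx : (2*j+1) - ((2*j+1)/2+1) = j := by omega
      rw [hidx]
      have hpow : (2*R)^(2*j+1) = (4*R^2)^j * (2*R) := by
        rw [pow_succ, show (4*R^2) = (2*R)^2 by ring, ← pow_mul]
      rw [hpow]
      ring
    have : Summable (fun j : ℕ => (2*R) * ((4*R^2)^j / ((j ! : ℕ):ℝ)) / Real.pi) :=
      (((Real.summable_pow_div_factorial (4*R^2)).mul_left (2*R)).div_const Real.pi)
    exact this.congr (fun j => (heq j).symm)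

lemma wright_eq (α x : ℝ) :
    wright (-(2*x)) (-(α/2)) (1 - α/2) = ∑' k : ℕ, mcoef k α * x^k := by
  unfold wright mcoef
  apply tsum_congr
  intro k
  have harg : -(α/2) * (k:ℝ) + (1 - α/2) = 1 - α * ((k:ℝ)+1) / 2 := by ring
  rw [harg, show -(2*x) = (-2)*x by ring, mul_pow]
  ring

/-- The Mainardi function `M_{α/2}(2x) = W(-2x,-α/2,1-α/2)` converges to
`e^{-x²}/√π` as `α → 1⁻`, pointwise on `[0,∞)` and uniformly on compact subsets of `[0,∞)`. -/
theorem mainardi_tendsto_gaussian :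
    (∀ x : ℝ, 0 ≤ x →
      Filter.Tendsto (fun α : ℝ => wright (-(2 * x)) (-(α / 2)) (1 - α / 2))
        (nhdsWithin 1 (Set.Ioo (0:ℝ) 1))
        (nhds (Real.exp (-x ^ 2) / Real.sqrt Real.pi))) ∧
    (∀ K : Set ℝ, K ⊆ Set.Ici 0 → IsCompact K →
      TendstoUniformlyOn (fun (α : ℝ) (x : ℝ) => wright (-(2 * x)) (-(α / 2)) (1 - α / 2))
        (fun x => Real.exp (-x ^ 2) / Real.sqrt Real.pi)
        (nhdsWithin 1 (Set.Ioo (0:ℝ) 1)) K) := by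
  have main : ∀ K : Set ℝ, K ⊆ Set.Ici 0 → IsCompact K →
      TendstoUniformlyOn (fun (α : ℝ) (x : ℝ) => wright (-(2 * x)) (-(α / 2)) (1 - α / 2))
        (fun x => Real.exp (-x ^ 2) / Real.sqrt Real.pi)
        (nhdsWithin 1 (Set.Ioo (0:ℝ) 1)) K := by
    intro K hK0 hK
    obtain ⟨b, hb⟩ := hK.bddAbove
    set R : ℝ := max b 1 with hRdef
    have hR1 : (1:ℝ) ≤ R := le_max_right _ _
    have hR0 : (0:ℝ) < R := lt_of_lt_of_le one_pos hR1
    have hxR : ∀ x ∈ K, 0 ≤ x ∧ x ≤ R := fun x hx =>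
      ⟨hK0 hx, le_trans (hb hx) (le_max_left _ _)⟩
    set l := nhdsWithin (1:ℝ) (Set.Ioo (0:ℝ) 1) with hl
    have hone : (1:ℝ) ∈ Set.Icc (1/2:ℝ) 1 := by constructor <;> norm_num
    have hev : ∀ᶠ α in l, α ∈ Set.Icc (1/2 : ℝ) 1 := by
      have h1 : ∀ᶠ α in l, α ∈ Set.Ioo (0:ℝ) 1 := eventually_mem_nhdsWithin
      have h2 : ∀ᶠ α in l, α ∈ Set.Ioi (1/2:ℝ) :=
        Filter.eventually_iff.mpr (mem_nhdsWithin_of_mem_nhds (Ioi_mem_nhds (by norm_num)))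
      filter_upwards [h1, h2] with α ha hb'
      exact ⟨le_of_lt hb', le_of_lt ha.2⟩
    set h : ℝ → ℕ → ℝ := fun α k => |mcoef k α - mcoef k 1| * R^k with hh
    set Nb : ℕ → ℝ := fun k => (2*R)^k / (Real.pi * (((k - (k/2+1))! : ℕ) : ℝ)) with hNb
    have hNbnn : ∀ k, 0 ≤ Nb k := fun k =>
      div_nonneg (pow_nonneg (by linarith) k)
        (mul_nonneg Real.pi_pos.le (Nat.cast_nonneg _))
    set bound : ℕ → ℝ := fun k => sSup ((fun α => h α k) '' Set.Icc (1/2:ℝ) 1) with hbound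
    have hcont : ∀ k, Continuous (fun α => h α k) := fun k =>
      (((mcoef_continuous k).sub continuous_const).abs).mul continuous_const
    have hbdd : ∀ k, BddAbove ((fun α => h α k) '' Set.Icc (1/2:ℝ) 1) := fun k =>
      (isCompact_Icc.image (hcont k)).bddAbove
    have hle : ∀ k, ∀ α ∈ Set.Icc (1/2:ℝ) 1, h α k ≤ bound k := fun k α hα =>
      le_csSup (hbdd k) ⟨α, hα, rfl⟩
    have hhnn : ∀ α k, 0 ≤ h α k := fun α k =>
      mul_nonneg (abs_nonneg _) (pow_nonneg hR0.le k)
    have hbound0 : ∀ k, 0 ≤ bound k := by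
      intro k
      have h0 : h 1 k = 0 := by simp [hh]
      have := hle k 1 hone
      linarith
    have hb2 : ∀ k, 7 ≤ k → bound k ≤ 2 * Nb k := by
      intro k hk
      apply Real.sSup_le
      · rintro y ⟨α, hα, rfl⟩
        calc h α k ≤ |mcoef k α| * R^k + |mcoef k 1| * R^k := by
              have habs : |mcoef k α - mcoef k 1| ≤ |mcoef k α| + |mcoef k 1| :=
                abs_sub _ _
              have := mul_le_mul_of_nonneg_right habs (pow_nonneg hR0.le k)
              rw [hh]
              dsimp only
              linarith [this]
          _ ≤ Nb k + Nb k := add_le_add (mcoef_bound hk hα hR1) (mcoef_bound hk hone hR1)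
          _ = 2 * Nb k := by ring
      · linarith [hNbnn k]
    have hsum_bound : Summable bound := by
      apply Summable.of_norm_bounded_eventually_nat (g := fun k => 2 * Nb k)
        ((summable_Nb hR0).mul_left 2)
      filter_upwards [Filter.eventually_ge_atTop 7] with k hk
      rw [Real.norm_eq_abs, abs_of_nonneg (hbound0 k)]
      exact hb2 k hk
    have hsum_h : ∀ α ∈ Set.Icc (1/2:ℝ) 1, Summable (fun k => h α k) := fun α hα =>
      Summable.of_nonneg_of_le (fun k => hhnn α k) (fun k => hle k α hα) hsum_bound
    have hS : Filter.Tendsto (fun α => ∑' k, h α k) l (nhds 0) := by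
      have hT := tendsto_tsum_of_dominated_convergence (𝓕 := l)
        (f := fun α k => h α k) (g := fun _ : ℕ => (0:ℝ)) (bound := bound) hsum_bound ?_ ?_
      · simpa using hT
      · intro k
        have hc : Filter.Tendsto (fun α => mcoef k α) l (nhds (mcoef k 1)) :=
          ((mcoef_continuous k).tendsto 1).mono_left nhdsWithin_le_nhds
        have ht2 : Filter.Tendsto (fun α => h α k) l
            (nhds (|mcoef k 1 - mcoef k 1| * R^k)) :=
          ((hc.sub tendsto_const_nhds).abs).mul tendsto_const_nhds
        simpa using ht2
      · filter_upwards [hev] with α hα k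
        rw [Real.norm_eq_abs, abs_of_nonneg (hhnn α k)]
        exact hle k α hα
    rw [Metric.tendstoUniformlyOn_iff]
    intro ε hε
    have hSe : ∀ᶠ α in l, ∑' k, h α k < ε := hS.eventually (gt_mem_nhds hε)
    filter_upwards [hev, hSe] with α hα hSα
    intro x hx
    obtain ⟨hx0, hxR'⟩ := hxR x hx
    have hxk : ∀ k : ℕ, |x|^k ≤ R^k := fun k =>
      pow_le_pow_left₀ (abs_nonneg x) (by rw [abs_of_nonneg hx0]; exact hxR') k
    have hsum1 : Summable (fun k => mcoef k 1 * x^k) := summable_mone x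
    have hdle : ∀ k : ℕ, |mcoef k 1 * x^k - mcoef k α * x^k| ≤ h α k := by
      intro k
      rw [hh]; dsimp only
      calc |mcoef k 1 * x^k - mcoef k α * x^k|
          = |mcoef k α - mcoef k 1| * |x|^k := by
            rw [← abs_pow, ← abs_mul, abs_sub_comm]
            congr 1
            ring
        _ ≤ |mcoef k α - mcoef k 1| * R^k :=
            mul_le_mul_of_nonneg_left (hxk k) (abs_nonneg _)
    have hsumd : Summable (fun k => mcoef k 1 * x^k - mcoef k α * x^k) := by
      apply Summable.of_norm_bounded (g := fun k => h α k) (hsum_h α hα)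
      intro k
      rw [Real.norm_eq_abs]
      exact hdle k
    have hsumα : Summable (fun k => mcoef k α * x^k) := by
      have := hsum1.sub hsumd
      exact this.congr (fun k => by ring)
    have habsle : |(∑' k, mcoef k 1 * x^k) - ∑' k, mcoef k α * x^k| ≤ ∑' k, h α k := by
      rw [← Summable.tsum_sub hsum1 hsumα]
      have h1 : Summable (fun k => ‖mcoef k 1 * x^k - mcoef k α * x^k‖) := by
        apply Summable.of_nonneg_of_le (fun k => norm_nonneg _) ?_ (hsum_h α hα)
        intro k
        rw [Real.norm_eq_abs]
        exact hdle k
      calc |∑' k, (mcoef k 1 * x^k - mcoef k α * x^k)|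
          ≤ ∑' k, ‖mcoef k 1 * x^k - mcoef k α * x^k‖ := norm_tsum_le_tsum_norm h1
        _ ≤ ∑' k, h α k := Summable.tsum_le_tsum (fun k => (Real.norm_eq_abs _) ▸ hdle k) h1 (hsum_h α hα)
    rw [Real.dist_eq]
    calc |Real.exp (-x^2) / Real.sqrt Real.pi - wright (-(2*x)) (-(α/2)) (1 - α/2)|
        = |(∑' k, mcoef k 1 * x^k) - ∑' k, mcoef k α * x^k| := by
          rw [wright_eq, sum_mcoef_one]
      _ ≤ ∑' k, h α k := habsle
      _ < ε := hSα
  constructor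
  · intro x hx
    have hsing := (main {x} (by simpa using hx) isCompact_singleton).tendsto_at
      (Set.mem_singleton x)
    simpa using hsing
  · exact main
end
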